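/- arXiv:1311.4078 — 8 statements merged into one kernel-verified Lean document; each statement's English description precedes it below -/
import Mathlib

section
/- Fix K > 0 and let BS(S,v) = S·Φ((ln(S/K) + v/2)/√v) − K·Φ((ln(S/K) − v/2)/√v) for S > 0, v > 0, where Φ is the standard normal cumulative distribution function. Then for every S > 0 and v > 0, the second partial derivative of BS with respect to v exists and equals −(S/(4√(2π)·v^{3/2}))·exp(−(ln(S/K) + v/2)²/(2v)) + (S/(4√(2π)·v^{5/2}))·((ln(S/K))² − v²/4)·exp(−(ln(S/K) + v/2)²/(2v)). -/
open Real MeasureTheory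

/-- The standard normal cumulative distribution function. -/
noncomputable def stdNormalCDF (x : ℝ) : ℝ :=
  (Real.sqrt (2 * Real.pi))⁻¹ * ∫ t in Set.Iic x, Real.exp (-t ^ 2 / 2)

/-- The Black–Scholes call price as a function of spot `S` and total variance `v`,
with strike `K`. -/
noncomputable def BSprice (K S v : ℝ) : ℝ :=
  S * stdNormalCDF ((Real.log (S / K) + v / 2) / Real.sqrt v)
    - K * stdNormalCDF ((Real.log (S / K) - v / 2) / Real.sqrt v)

lemma integrable_gauss : Integrable (fun t : ℝ => Real.exp (-t ^ 2 / 2)) := by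
  have h := integrable_exp_neg_mul_sq (show (0:ℝ) < 1/2 by norm_num)
  have : (fun t : ℝ => Real.exp (-t ^ 2 / 2)) = fun t : ℝ => Real.exp (-(1/2) * t ^ 2) := by
    funext t; ring_nf
  rw [this]; exact h

lemma hasDerivAt_stdNormalCDF (x : ℝ) :
    HasDerivAt stdNormalCDF ((Real.sqrt (2 * Real.pi))⁻¹ * Real.exp (-x ^ 2 / 2)) x := by
  have hc : Continuous fun t : ℝ => Real.exp (-t ^ 2 / 2) := by continuity
  have hd : HasDerivAt (fun u : ℝ => ∫ t in (0:ℝ)..u, Real.exp (-t ^ 2 / 2))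
      (Real.exp (-x ^ 2 / 2)) x :=
    intervalIntegral.integral_hasDerivAt_right (integrable_gauss.intervalIntegrable)
      (hc.aestronglyMeasurable.stronglyMeasurableAtFilter) hc.continuousAt
  have heq : stdNormalCDF = fun u : ℝ => (Real.sqrt (2 * Real.pi))⁻¹ *
      ((∫ t in Set.Iic (0:ℝ), Real.exp (-t ^ 2 / 2)) + ∫ t in (0:ℝ)..u, Real.exp (-t ^ 2 / 2)) := by
    funext u
    rw [stdNormalCDF]
    congr 1
    rw [← intervalIntegral.integral_Iic_sub_Iic integrable_gauss.integrableOn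
      integrable_gauss.integrableOn]
    ring
  rw [heq]
  exact (hd.const_add _).const_mul _

lemma hasDerivAt_BS (K S : ℝ) (hK : 0 < K) (hS : 0 < S) {u : ℝ} (hu : 0 < u) :
    HasDerivAt (fun w : ℝ => BSprice K S w)
      (S / (2 * Real.sqrt (2 * Real.pi)) * Real.exp (-(Real.log (S / K) + u / 2) ^ 2 / (2 * u))
        / Real.sqrt u) u := by
  obtain ⟨s, hs, rfl⟩ : ∃ s : ℝ, 0 < s ∧ s ^ 2 = u :=
    ⟨Real.sqrt u, Real.sqrt_pos.2 hu, Real.sq_sqrt hu.le⟩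
  have hss : Real.sqrt (s ^ 2) = s := Real.sqrt_sq hs.le
  have hsne : s ≠ 0 := hs.ne'
  have hc : Real.sqrt (2 * Real.pi) ≠ 0 := ne_of_gt (Real.sqrt_pos.2 (by positivity))
  set L := Real.log (S / K) with hL
  have hsq : HasDerivAt Real.sqrt (1 / (2 * s)) (s ^ 2) := by
    have h := Real.hasDerivAt_sqrt (pow_ne_zero 2 hsne)
    rwa [hss] at h
  have hd1 := (((hasDerivAt_id (s ^ 2)).div_const 2).const_add L).div hsq (by rw [hss]; exact hsne)
  have hd2 := (((hasDerivAt_id (s ^ 2)).div_const 2).const_sub L).div hsq (by rw [hss]; exact hsne)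
  have h1 := ((hasDerivAt_stdNormalCDF ((L + s ^ 2 / 2) / Real.sqrt (s ^ 2))).comp (s ^ 2) hd1).const_mul S
  have h2 := ((hasDerivAt_stdNormalCDF ((L - s ^ 2 / 2) / Real.sqrt (s ^ 2))).comp (s ^ 2) hd2).const_mul K
  have h := h1.sub h2
  rw [hss] at h
  have hfun : (fun w : ℝ => BSprice K S w) =ᶠ[nhds (s ^ 2)]
      (fun w : ℝ => S * (stdNormalCDF ∘ fun w : ℝ => (L + w / 2) / Real.sqrt w) w
        - K * (stdNormalCDF ∘ fun w : ℝ => (L - w / 2) / Real.sqrt w) w) :=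
    Filter.Eventually.of_forall fun w => by simp [BSprice, Function.comp, hL]
  have h' := HasDerivAt.congr_of_eventuallyEq h hfun
  refine h'.congr_deriv (Eq.symm ?_)
  have hE1 : Real.exp (-(L + s ^ 2 / 2) ^ 2 / (2 * s ^ 2))
      = Real.exp (-((L + s ^ 2 / 2) / s) ^ 2 / 2) := by
    congr 1; rw [div_pow]; field_simp
    try ring
    try tauto
  have hE2 : Real.exp (-((L - s ^ 2 / 2) / s) ^ 2 / 2)
      = Real.exp (-((L + s ^ 2 / 2) / s) ^ 2 / 2) * (S / K) := by
    rw [← Real.exp_log (div_pos hS hK), ← Real.exp_add, ← hL]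
    congr 1; rw [div_pow, div_pow]; field_simp
    try ring
    try tauto
  rw [hss, hE1, hE2]
  simp only [id]
  field_simp
  ring

/-- Second derivative of the Black–Scholes price with respect to the total variance `v`:
`∂²BS/∂v² = −(S/(4√(2π)v^{3/2}))·e^{−d²/2v} + (S/(4√(2π)v^{5/2}))((ln(S/K))² − v²/4)·e^{−d²/2v}`
where `d = ln(S/K) + v/2`. -/
theorem stmt2 (K : ℝ) (hK : 0 < K) (S v : ℝ) (hS : 0 < S) (hv : 0 < v) :
    HasDerivAt (fun w : ℝ => deriv (fun u : ℝ => BSprice K S u) w)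
      (-(S / (4 * Real.sqrt (2 * Real.pi) * v ^ ((3 : ℝ) / 2)))
          * Real.exp (-(Real.log (S / K) + v / 2) ^ 2 / (2 * v))
        + S / (4 * Real.sqrt (2 * Real.pi) * v ^ ((5 : ℝ) / 2))
          * ((Real.log (S / K)) ^ 2 - v ^ 2 / 4)
          * Real.exp (-(Real.log (S / K) + v / 2) ^ 2 / (2 * v))) v := by
  obtain ⟨s, hs, rfl⟩ : ∃ s : ℝ, 0 < s ∧ s ^ 2 = v :=
    ⟨Real.sqrt v, Real.sqrt_pos.2 hv, Real.sq_sqrt hv.le⟩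
  have hsne : s ≠ 0 := hs.ne'
  have hss : Real.sqrt (s ^ 2) = s := Real.sqrt_sq hs.le
  have hc : Real.sqrt (2 * Real.pi) ≠ 0 := ne_of_gt (Real.sqrt_pos.2 (by positivity))
  have h32 : (s ^ 2 : ℝ) ^ ((3 : ℝ) / 2) = s ^ 3 := by
    rw [← Real.rpow_natCast s 2, ← Real.rpow_mul hs.le,
      show ((2:ℕ):ℝ) * ((3:ℝ)/2) = ((3:ℕ):ℝ) by norm_num, Real.rpow_natCast]
  have h52 : (s ^ 2 : ℝ) ^ ((5 : ℝ) / 2) = s ^ 5 := by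
    rw [← Real.rpow_natCast s 2, ← Real.rpow_mul hs.le,
      show ((2:ℕ):ℝ) * ((5:ℝ)/2) = ((5:ℕ):ℝ) by norm_num, Real.rpow_natCast]
  rw [h32, h52]
  have hev : (fun w : ℝ => deriv (fun u : ℝ => BSprice K S u) w) =ᶠ[nhds (s ^ 2)]
      (fun w : ℝ => S / (2 * Real.sqrt (2 * Real.pi))
        * Real.exp (-(Real.log (S / K) + w / 2) ^ 2 / (2 * w)) / Real.sqrt w) := by
    filter_upwards [Ioi_mem_nhds (pow_pos hs 2)] with w hw
    exact (hasDerivAt_BS K S hK hS hw).deriv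
  refine HasDerivAt.congr_of_eventuallyEq ?_ hev
  set L := Real.log (S / K) with hL
  have hsq : HasDerivAt Real.sqrt (1 / (2 * s)) (s ^ 2) := by
    have h := Real.hasDerivAt_sqrt (pow_ne_zero 2 hsne)
    rwa [hss] at h
  have hh := ((((hasDerivAt_id (s ^ 2)).div_const 2).const_add L).pow 2).neg.div
      ((hasDerivAt_id (s ^ 2)).const_mul 2) (by positivity)
  have hg := (hh.exp.const_mul (S / (2 * Real.sqrt (2 * Real.pi)))).div hsq (by rw [hss]; exact hsne)
  rw [hss] at hg
  refine hg.congr_deriv (Eq.symm ?_)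
  simp only [id, Pi.div_apply, Pi.neg_apply, Pi.pow_apply]
  push_cast
  field_simp
  ring
end

section
/- Fix K > 0 and let BS(S,v) = S·Φ((ln(S/K) + v/2)/√v) − K·Φ((ln(S/K) − v/2)/√v) for S > 0, v > 0, where Φ is the standard normal cumulative distribution function. Then for every S > 0 and v > 0, the mixed second partial derivative ∂²BS/∂S∂v exists and equals (1/(4√v) − ln(S/K)/(2v^{3/2}))·(1/√(2π))·exp(−(ln(S/K) + v/2)²/(2v)). -/
open Real MeasureTheory

lemma hasDerivAt_BSprice_v (K s : ℝ) (hK : 0 < K) (hs : 0 < s) (v : ℝ) (hv : 0 < v) :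
    HasDerivAt (fun u => BSprice K s u)
      (s * ((Real.sqrt (2 * Real.pi))⁻¹
          * Real.exp (-((Real.log (s / K) + v / 2) / Real.sqrt v) ^ 2 / 2))
        / (2 * Real.sqrt v)) v := by
  set L := Real.log (s / K) with hL
  have hsv : 0 < Real.sqrt v := Real.sqrt_pos.mpr hv
  have hvsq : Real.sqrt v ^ 2 = v := Real.sq_sqrt hv.le
  have hd1 : HasDerivAt (fun u => (L + u / 2) / Real.sqrt u)
      (((1 / 2) * Real.sqrt v - (L + v / 2) * (1 / (2 * Real.sqrt v))) / Real.sqrt v ^ 2) v := by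
    have hnum : HasDerivAt (fun u : ℝ => L + u / 2) (1 / 2) v :=
      ((hasDerivAt_id v).div_const 2).const_add L
    exact hnum.div (Real.hasDerivAt_sqrt hv.ne') hsv.ne'
  have hd2 : HasDerivAt (fun u => (L - u / 2) / Real.sqrt u)
      ((-(1 / 2) * Real.sqrt v - (L - v / 2) * (1 / (2 * Real.sqrt v))) / Real.sqrt v ^ 2) v := by
    have hnum : HasDerivAt (fun u : ℝ => L - u / 2) (-(1 / 2)) v := by
      exact ((hasDerivAt_id v).div_const 2).const_sub L
    exact hnum.div (Real.hasDerivAt_sqrt hv.ne') hsv.ne'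
  have hC1 := (hasDerivAt_stdNormalCDF ((L + v / 2) / Real.sqrt v)).comp v hd1
  have hC2 := (hasDerivAt_stdNormalCDF ((L - v / 2) / Real.sqrt v)).comp v hd2
  have hfull := (hC1.const_mul s).sub (hC2.const_mul K)
  have hfun : (fun u => s * (stdNormalCDF ∘ fun u => (L + u / 2) / Real.sqrt u) u
      - K * (stdNormalCDF ∘ fun u => (L - u / 2) / Real.sqrt u) u) = fun u => BSprice K s u := by
    funext u; simp [BSprice, Function.comp, hL]
  change HasDerivAt (fun u => s * (stdNormalCDF ∘ fun u => (L + u / 2) / Real.sqrt u) u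
      - K * (stdNormalCDF ∘ fun u => (L - u / 2) / Real.sqrt u) u) _ v at hfull
  rw [hfun] at hfull
  convert hfull using 1
  -- derivative values equality
  set c := (Real.sqrt (2 * Real.pi))⁻¹
  have hKexp : K * Real.exp (-((L - v / 2) / Real.sqrt v) ^ 2 / 2)
      = s * Real.exp (-((L + v / 2) / Real.sqrt v) ^ 2 / 2) := by
    have hexpL : Real.exp L = s / K := by rw [hL, Real.exp_log (div_pos hs hK)]
    have harg : -((L - v / 2) / Real.sqrt v) ^ 2 / 2
        = -((L + v / 2) / Real.sqrt v) ^ 2 / 2 + L := by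
      rw [← hvsq]
      have hw : Real.sqrt v ≠ 0 := hsv.ne'
      field_simp
      linear_combination (-8 * L) * Real.sq_sqrt (sq_nonneg (Real.sqrt v))
    rw [harg, Real.exp_add, hexpL]
    field_simp
  have hd1v : (((1 / 2) * Real.sqrt v - (L + v / 2) * (1 / (2 * Real.sqrt v))) / Real.sqrt v ^ 2)
      - ((-(1 / 2) * Real.sqrt v - (L - v / 2) * (1 / (2 * Real.sqrt v))) / Real.sqrt v ^ 2)
      = 1 / (2 * Real.sqrt v) := by
    rw [← hvsq]
    have hw : Real.sqrt v ≠ 0 := hsv.ne'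
    field_simp
    linear_combination 2 * Real.sq_sqrt (sq_nonneg (Real.sqrt v))
  set E1 := Real.exp (-((L + v / 2) / Real.sqrt v) ^ 2 / 2)
  set E2 := Real.exp (-((L - v / 2) / Real.sqrt v) ^ 2 / 2)
  set D1 := ((1 / 2) * Real.sqrt v - (L + v / 2) * (1 / (2 * Real.sqrt v))) / Real.sqrt v ^ 2
  set D2 := ((-(1 / 2) * Real.sqrt v - (L - v / 2) * (1 / (2 * Real.sqrt v))) / Real.sqrt v ^ 2)
  linear_combination (c * D2) * hKexp - (s * c * E1) * hd1v

/-- Mixed second derivative of the Black–Scholes price: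
`∂²BS/∂S∂v = (1/(4√v) − ln(S/K)/(2v^{3/2}))·(1/√(2π))·exp(−(ln(S/K)+v/2)²/(2v))`. -/
theorem stmt3 (K : ℝ) (hK : 0 < K) (S v : ℝ) (hS : 0 < S) (hv : 0 < v) :
    HasDerivAt (fun s : ℝ => deriv (fun u : ℝ => BSprice K s u) v)
      ((1 / (4 * Real.sqrt v) - Real.log (S / K) / (2 * v ^ ((3 : ℝ) / 2)))
        * (Real.sqrt (2 * Real.pi))⁻¹
        * Real.exp (-(Real.log (S / K) + v / 2) ^ 2 / (2 * v))) S := by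
  have hsv : 0 < Real.sqrt v := Real.sqrt_pos.mpr hv
  have hvsq : Real.sqrt v ^ 2 = v := Real.sq_sqrt hv.le
  set c := (Real.sqrt (2 * Real.pi))⁻¹ with hc
  -- derivative of s ↦ log (s / K) at S
  have hlog : HasDerivAt (fun s : ℝ => Real.log (s / K)) (1 / S) S := by
    have h0 : HasDerivAt (fun s : ℝ => Real.log s - Real.log K) (1 / S) S := by
      simpa [one_div] using (Real.hasDerivAt_log hS.ne').sub_const (Real.log K)
    refine h0.congr_of_eventuallyEq ?_
    filter_upwards [eventually_gt_nhds hS] with s hs0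
    rw [Real.log_div hs0.ne' hK.ne']
  have hinner : HasDerivAt (fun s : ℝ => -(Real.log (s / K) + v / 2) ^ 2 / (2 * v))
      (-(2 * (Real.log (S / K) + v / 2) * (1 / S)) / (2 * v)) S := by
    have h1 := (hlog.add_const (v / 2)).pow 2
    have h2 := h1.neg.div_const (2 * v)
    simpa [pow_one, mul_comm, mul_assoc, mul_left_comm] using h2
  have hexp := hinner.exp
  have hprod := (hasDerivAt_id S).mul hexp
  have hG := hprod.const_mul (c / (2 * Real.sqrt v))
  -- identify the function with the v-derivative of BSprice near S
  have hEq : (fun s : ℝ => deriv (fun u : ℝ => BSprice K s u) v)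
      =ᶠ[nhds S] (fun s : ℝ => c / (2 * Real.sqrt v)
        * (s * Real.exp (-(Real.log (s / K) + v / 2) ^ 2 / (2 * v)))) := by
    filter_upwards [eventually_gt_nhds hS] with s hs0
    have hd := (hasDerivAt_BSprice_v K s hK hs0 v hv).deriv
    rw [hd]
    have harg : -((Real.log (s / K) + v / 2) / Real.sqrt v) ^ 2 / 2
        = -(Real.log (s / K) + v / 2) ^ 2 / (2 * v) := by
      rw [div_pow, hvsq]; ring
    rw [harg]; ring
  have hfinal := hG.congr_of_eventuallyEq hEq
  refine hfinal.congr_deriv ?_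
  symm
  have hrpow : v ^ ((3 : ℝ) / 2) = v * Real.sqrt v := by
    rw [show ((3 : ℝ) / 2) = 1 + 1 / 2 by norm_num, Real.rpow_add hv, Real.rpow_one,
      Real.sqrt_eq_rpow]
  rw [hrpow]
  set E := Real.exp (-(Real.log (S / K) + v / 2) ^ 2 / (2 * v))
  set L := Real.log (S / K)
  field_simp
  ring_nf
  simp only [id_eq]
  ring
end

section
/- Let S > 0, K > 0, V > 0, and let N be a real Gaussian random variable with mean −V/2 and variance V. Then E[(S·e^N − K)₊] = S·Φ((ln(S/K) + V/2)/√V) − K·Φ((ln(S/K) − V/2)/√V), where x₊ = max(x,0) and Φ is the standard normal cumulative distribution function. -/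
open Real MeasureTheory ProbabilityTheory

lemma key_integral (m a V : ℝ) (hV : 0 < V) :
    ∫ x in Set.Ioi a, gaussianPDFReal m V.toNNReal x
      = stdNormalCDF ((m - a) / Real.sqrt V) := by
  have hVnn : (V.toNNReal : ℝ) = V := Real.coe_toNNReal V hV.le
  have hsV : 0 < Real.sqrt V := Real.sqrt_pos.mpr hV
  simp only [gaussianPDFReal, hVnn]
  rw [MeasureTheory.integral_const_mul]
  have hshift : ∫ x in Set.Ioi a, Real.exp (-(x - m)^2 / (2*V))
      = ∫ x in Set.Ioi (a - m), Real.exp (-x^2 / (2*V)) := by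
    have h := (measurePreserving_add_right volume m).setIntegral_preimage_emb
        ((MeasurableEquiv.addRight m).measurableEmbedding)
        (fun y => Real.exp (-(y-m)^2 / (2*V))) (Set.Ioi a)
    rw [← h]
    have hset : (fun x => x + m) ⁻¹' Set.Ioi a = Set.Ioi (a - m) := by
      ext x; simp [sub_lt_iff_lt_add]
    rw [hset]
    apply setIntegral_congr_fun measurableSet_Ioi
    intro x _; ring_nf
  have hscale : ∫ x in Set.Ioi (a - m), Real.exp (-x^2 / (2*V))
      = Real.sqrt V * ∫ u in Set.Ioi ((a - m) / Real.sqrt V), Real.exp (-u^2 / 2) := by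
    have h := integral_comp_mul_left_Ioi (fun x => Real.exp (-x^2 / (2*V)))
        ((a - m) / Real.sqrt V) hsV
    rw [mul_div_cancel₀ _ hsV.ne'] at h
    have h2 : ∀ u : ℝ, Real.exp (-(Real.sqrt V * u)^2 / (2*V)) = Real.exp (-u^2/2) := by
      intro u
      congr 1
      rw [mul_pow, Real.sq_sqrt hV.le]
      field_simp
    simp only [h2] at h
    rw [smul_eq_mul] at h
    rw [h, ← mul_assoc, mul_inv_cancel₀ hsV.ne', one_mul]
  have hneg : ∫ u in Set.Ioi ((a - m) / Real.sqrt V), Real.exp (-u^2 / 2)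
      = ∫ u in Set.Iic ((m - a) / Real.sqrt V), Real.exp (-u^2 / 2) := by
    have h := integral_comp_neg_Ioi (c := (a - m) / Real.sqrt V)
      (f := fun u : ℝ => Real.exp (-u^2 / 2))
    simp only [neg_sq] at h
    rw [h]
    congr 1
    rw [← neg_div, neg_sub]
  rw [hshift, hscale, hneg, stdNormalCDF]
  rw [show (2 : ℝ) * π * V = (2 * π) * V by ring, Real.sqrt_mul (by positivity) V,
    mul_inv]
  field_simp

lemma complete_square (V : ℝ) (hV : 0 < V) (x : ℝ) :
    Real.exp x * gaussianPDFReal (-V/2) V.toNNReal x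
      = gaussianPDFReal (V/2) V.toNNReal x := by
  have hVnn : (V.toNNReal : ℝ) = V := Real.coe_toNNReal V hV.le
  simp only [gaussianPDFReal, hVnn]
  rw [mul_comm (Real.exp x), mul_assoc, ← Real.exp_add]
  congr 2
  field_simp
  ring

/-- For `N` Gaussian with mean `−V/2` and variance `V`, the expectation of the call payoff
`(S·e^N − K)₊` is the Black–Scholes formula. -/
theorem stmt4 (S K V : ℝ) (hS : 0 < S) (hK : 0 < K) (hV : 0 < V) :
    ∫ n, max (S * Real.exp n - K) 0 ∂(gaussianReal (-V / 2) (Real.toNNReal V)) =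
      S * stdNormalCDF ((Real.log (S / K) + V / 2) / Real.sqrt V)
        - K * stdNormalCDF ((Real.log (S / K) - V / 2) / Real.sqrt V) := by
  have hv0 : V.toNNReal ≠ 0 := by
    simp only [ne_eq, Real.toNNReal_eq_zero, not_le]; exact hV
  have hVnn : (V.toNNReal : ℝ) = V := Real.coe_toNNReal V hV.le
  set a := Real.log (K / S) with ha
  rw [gaussianReal_of_var_ne_zero _ hv0, gaussianPDF_def]
  have hwd : ∫ n, max (S * Real.exp n - K) 0
        ∂(volume.withDensity fun x => ENNReal.ofReal (gaussianPDFReal (-V/2) V.toNNReal x))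
      = ∫ x, ((gaussianPDFReal (-V/2) V.toNNReal x).toNNReal : ℝ)
          • max (S * Real.exp x - K) 0 := by
    exact integral_withDensity_eq_integral_smul
      (measurable_gaussianPDFReal _ _).real_toNNReal _
  rw [show (-V/2 : ℝ) = -V/2 by ring] at hwd
  rw [hwd]
  have hco : ∀ x : ℝ, ((gaussianPDFReal (-V/2) V.toNNReal x).toNNReal : ℝ)
      • max (S * Real.exp x - K) 0
      = (Set.Ioi a).indicator
          (fun x => gaussianPDFReal (-V/2) V.toNNReal x * (S * Real.exp x - K)) x := by
    intro x
    rw [smul_eq_mul, Real.coe_toNNReal _ (gaussianPDFReal_nonneg _ _ _)]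
    by_cases hx : a < x
    · rw [Set.indicator_of_mem (Set.mem_Ioi.mpr hx), max_eq_left]
      have : K / S < Real.exp x := by
        rw [ha] at hx
        calc K / S = Real.exp (Real.log (K / S)) := (Real.exp_log (by positivity)).symm
          _ < Real.exp x := Real.exp_lt_exp.mpr hx
      have : K < S * Real.exp x := by
        rw [div_lt_iff₀ hS] at this; linarith [this]
      linarith
    · rw [Set.indicator_of_notMem (fun h => hx (Set.mem_Ioi.mp h)), max_eq_right, mul_zero]
      push_neg at hx
      have : Real.exp x ≤ K / S := by
        rw [ha] at hx
        calc Real.exp x ≤ Real.exp (Real.log (K/S)) := Real.exp_le_exp.mpr hx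
          _ = K / S := Real.exp_log (by positivity)
      have h2 : S * Real.exp x ≤ S * (K / S) := by nlinarith
      have h3 : S * (K / S) = K := by field_simp
      linarith
  simp_rw [hco]
  rw [integral_indicator measurableSet_Ioi]
  have hcong : ∫ x in Set.Ioi a,
        gaussianPDFReal (-V/2) V.toNNReal x * (S * Real.exp x - K)
      = ∫ x in Set.Ioi a,
        (S * gaussianPDFReal (V/2) V.toNNReal x - K * gaussianPDFReal (-V/2) V.toNNReal x) := by
    apply setIntegral_congr_fun measurableSet_Ioi
    intro x _
    dsimp only
    rw [← complete_square V hV x]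
    ring
  rw [hcong, integral_sub, integral_const_mul, integral_const_mul,
    key_integral _ _ _ hV, key_integral _ _ _ hV]
  · have hlog : a = -Real.log (S / K) := by
      rw [ha, ← Real.log_inv, inv_div]
    rw [hlog]
    ring_nf
  · exact ((integrable_gaussianPDFReal _ _).const_mul S).integrableOn
  · exact ((integrable_gaussianPDFReal _ _).const_mul K).integrableOn
end

section
/- Let ε₁, …, ε_T (T ≥ 1) be independent standard Gaussian random variables, let v₁, …, v_T > 0, set V = Σ_{i=1}^T v_i and N = Σ_{i=1}^T √(v_i)·ε_i − V/2. Let f : ℝ → ℝ be bounded and measurable. Then the conditional expectation of f(ε_j) given the σ-algebra generated by N equals h(N) almost surely, where h(n) = E[f((√(v_j)/V)·(n + V/2) + Y_j)] and Y_j is a centered Gaussian random variable with variance 1 − v_j/V. -/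
open Real MeasureTheory ProbabilityTheory
open scoped NNReal ENNReal

noncomputable def gpdf (v x : ℝ) : ℝ :=
  (Real.sqrt (2 * Real.pi * v))⁻¹ * Real.exp (-(x ^ 2) / (2 * v))

lemma gpdf_nonneg (v x : ℝ) : 0 ≤ gpdf v x := by
  unfold gpdf; positivity

lemma measurable_gpdf (v : ℝ) : Measurable (gpdf v) := by
  unfold gpdf
  fun_prop

lemma gaussianPDFReal_eq_gpdf {v : ℝ} (hv : 0 ≤ v) (m x : ℝ) :
    gaussianPDFReal m v.toNNReal x = gpdf v (x - m) := by
  rw [gaussianPDFReal]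
  rw [Real.coe_toNNReal _ hv, gpdf]


lemma gauss_factor {u t : ℝ} (c : ℝ) (hu : 0 < u) (ht : 0 < t) (x z : ℝ) :
    gpdf u x * gpdf t (z - c * x)
      = gpdf (c ^ 2 * u + t) z
        * gpdf (u * t / (c ^ 2 * u + t)) (x - c * u * z / (c ^ 2 * u + t)) := by
  have hw : 0 < c ^ 2 * u + t := by positivity
  have key : ∀ A B p q : ℝ, (A⁻¹ * Real.exp p) * (B⁻¹ * Real.exp q)
      = (A * B)⁻¹ * Real.exp (p + q) := by
    intro A B p q; rw [Real.exp_add, mul_inv]; ring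
  unfold gpdf
  rw [key, key]
  congr 2
  · rw [← Real.sqrt_mul (by positivity), ← Real.sqrt_mul (by positivity)]
    congr 1
    field_simp
  · field_simp
    ring

lemma gaussianPDF_eq_gpdf (m : ℝ) (v : ℝ≥0) (x : ℝ) :
    gaussianPDF m v x = ENNReal.ofReal (gpdf v (x - m)) := rfl

lemma toNNReal_coe_eq (v : ℝ≥0) : (v : ℝ).toNNReal = v := Real.toNNReal_coe

lemma lintegral_gpdf_one {v : ℝ≥0} (hv : v ≠ 0) (m : ℝ) :
    ∫⁻ x, ENNReal.ofReal (gpdf v (x - m)) = 1 := by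
  have := lintegral_gaussianPDF_eq_one m hv
  simpa [gaussianPDF_eq_gpdf] using this

lemma gaussianReal_withDensity {v : ℝ≥0} (hv : v ≠ 0) :
    gaussianReal 0 v = volume.withDensity (fun x => ENNReal.ofReal (gpdf v x)) := by
  rw [gaussianReal_of_var_ne_zero _ hv]
  congr 1
  ext x
  rw [gaussianPDF_eq_gpdf, sub_zero]

lemma gauss_factor_one {u t : ℝ} (hu : 0 < u) (ht : 0 < t) (x z : ℝ) :
    gpdf u x * gpdf t (z - x)
      = gpdf (u + t) z * gpdf (u * t / (u + t)) (x - u * z / (u + t)) := by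
  have := gauss_factor 1 hu ht x z
  simpa using this

lemma map_eq_dirac_ae {Ω : Type*} [MeasureSpace Ω] [IsProbabilityMeasure (ℙ : Measure Ω)]
    {Z : Ω → ℝ} (hZ : Measurable Z) (hZg : Measure.map Z ℙ = gaussianReal 0 0) :
    Z =ᵐ[ℙ] fun _ => 0 := by
  rw [Filter.EventuallyEq, ae_iff]
  have hms : MeasurableSet ({(0:ℝ)}ᶜ) := (measurableSet_singleton (0:ℝ)).compl
  have := Measure.map_apply (μ := ℙ) hZ hms
  rw [hZg, gaussianReal_zero_var, Measure.dirac_apply' _ hms] at this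
  simp only [Set.indicator_apply, Set.mem_compl_iff, Set.mem_singleton_iff, not_true,
    if_false, not_not] at this
  have hset : {a | ¬ Z a = 0} = Z ⁻¹' ({0}ᶜ) := by ext ω; simp
  rw [hset]
  simpa using this.symm

lemma gauss_conv {Ω : Type*} [MeasureSpace Ω] [IsProbabilityMeasure (ℙ : Measure Ω)]
    {X Y : Ω → ℝ} (hX : Measurable X) (hY : Measurable Y) (hind : IndepFun X Y ℙ)
    {u t : ℝ≥0} (hXg : Measure.map X ℙ = gaussianReal 0 u)
    (hYg : Measure.map Y ℙ = gaussianReal 0 t) :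
    Measure.map (fun ω => X ω + Y ω) ℙ = gaussianReal 0 (u + t) := by
  by_cases hu : u = 0
  · subst hu
    have hZ := map_eq_dirac_ae hX hXg
    have he : (fun ω => X ω + Y ω) =ᵐ[ℙ] Y := by
      filter_upwards [hZ] with ω hω; simp [hω]
    rw [Measure.map_congr he, hYg, zero_add]
  by_cases ht : t = 0
  · subst ht
    have hZ := map_eq_dirac_ae hY hYg
    have he : (fun ω => X ω + Y ω) =ᵐ[ℙ] X := by
      filter_upwards [hZ] with ω hω; simp [hω]
    rw [Measure.map_congr he, hXg, add_zero]
  have hu' : (0:ℝ) < u := by positivity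
  have ht' : (0:ℝ) < t := by positivity
  have hut : u + t ≠ 0 := by simp [hu]
  ext B hB
  rw [Measure.map_apply (f := fun ω => X ω + Y ω) (hX.add hY) hB]
  have hpair : Measure.map (fun ω => (X ω, Y ω)) ℙ
      = (gaussianReal 0 u).prod (gaussianReal 0 t) := by
    rw [← hXg, ← hYg]
    exact (indepFun_iff_map_prod_eq_prod_map_map hX.aemeasurable hY.aemeasurable).mp hind
  have hSmeas : MeasurableSet {p : ℝ × ℝ | p.1 + p.2 ∈ B} :=
    (measurable_fst.add measurable_snd) hB
  have h1 : (fun ω => X ω + Y ω) ⁻¹' B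
      = (fun ω => (X ω, Y ω)) ⁻¹' {p : ℝ × ℝ | p.1 + p.2 ∈ B} := rfl
  rw [h1, ← Measure.map_apply (hX.prodMk hY) hSmeas, hpair, Measure.prod_apply hSmeas]
  have h2 : ∀ x : ℝ, (gaussianReal 0 t) (Prod.mk x ⁻¹' {p : ℝ × ℝ | p.1 + p.2 ∈ B})
      = ∫⁻ y in B, ENNReal.ofReal (gpdf t (y - x)) := by
    intro x
    have hpre : Prod.mk x ⁻¹' {p : ℝ × ℝ | p.1 + p.2 ∈ B} = (fun y => x + y) ⁻¹' B := rfl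
    rw [hpre, ← Measure.map_apply (measurable_const_add x) hB, gaussianReal_map_const_add,
      zero_add, gaussianReal_apply _ ht B]
    exact lintegral_congr fun y => gaussianPDF_eq_gpdf x t y
  rw [lintegral_congr h2]
  have hmeasF : Measurable fun x : ℝ => ∫⁻ y in B, ENNReal.ofReal (gpdf t (y - x)) := by
    apply Measurable.lintegral_prod_right
    exact ((measurable_gpdf _).comp (measurable_snd.sub measurable_fst)).ennreal_ofReal
  rw [gaussianReal_withDensity hu,
    lintegral_withDensity_eq_lintegral_mul _ ((measurable_gpdf _).ennreal_ofReal) hmeasF]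
  simp only [Pi.mul_apply]
  have h3 : ∀ x : ℝ, ENNReal.ofReal (gpdf u x) * ∫⁻ y in B, ENNReal.ofReal (gpdf t (y - x))
      = ∫⁻ y in B, ENNReal.ofReal (gpdf u x) * ENNReal.ofReal (gpdf t (y - x)) := by
    intro x
    have hmi : Measurable fun y : ℝ => ENNReal.ofReal (gpdf (t:ℝ) (y - x)) :=
      ((measurable_gpdf _).comp (measurable_id.sub measurable_const)).ennreal_ofReal
    exact (lintegral_const_mul _ hmi).symm
  rw [lintegral_congr h3]
  rw [lintegral_lintegral_swap]
  swap
  · exact (Measurable.mul (((measurable_gpdf _).comp measurable_fst).ennreal_ofReal)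
      (((measurable_gpdf _).comp (measurable_snd.sub measurable_fst)).ennreal_ofReal)).aemeasurable
  have h4 : ∀ y : ℝ, (∫⁻ x, ENNReal.ofReal (gpdf u x) * ENNReal.ofReal (gpdf t (y - x)))
      = ENNReal.ofReal (gpdf (u + t) y) := by
    intro y
    have hpt : ∀ x : ℝ, ENNReal.ofReal (gpdf u x) * ENNReal.ofReal (gpdf t (y - x))
        = ENNReal.ofReal (gpdf ((u:ℝ) + t) y)
          * ENNReal.ofReal (gpdf ((u:ℝ) * t / (u + t)) (x - u * y / (u + t))) := by
      intro x
      rw [← ENNReal.ofReal_mul (gpdf_nonneg _ _), gauss_factor_one hu' ht',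
        ENNReal.ofReal_mul (gpdf_nonneg _ _)]
    simp only [hpt]
    rw [lintegral_const_mul]
    swap
    · exact ((measurable_gpdf _).comp (measurable_id.sub measurable_const)).ennreal_ofReal
    have hc : ((u:ℝ) * t / (u + t)).toNNReal ≠ 0 := by
      rw [ne_eq, Real.toNNReal_eq_zero, not_le]
      positivity
    have : ∫⁻ x, ENNReal.ofReal (gpdf ((u:ℝ) * t / (u + t)) (x - u * y / (u + t))) = 1 := by
      have h := lintegral_gpdf_one hc ((u:ℝ) * y / (u + t))
      rw [Real.coe_toNNReal _ (by positivity)] at h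
      exact h
    rw [this, mul_one]
  rw [lintegral_congr fun y => h4 y, gaussianReal_apply _ hut B]
  refine lintegral_congr fun y => ?_
  rw [gaussianPDF_eq_gpdf, sub_zero, NNReal.coe_add]

lemma gauss_factor_sqrt {a b : ℝ} (ha : 0 < a) (hb : 0 < b) (x s : ℝ) :
    gpdf 1 x * gpdf b (s - Real.sqrt a * x)
      = gpdf (a + b) s * gpdf (b / (a + b)) (x - Real.sqrt a / (a + b) * s) := by
  have h := gauss_factor (Real.sqrt a) one_pos hb x s
  rw [Real.sq_sqrt ha.le] at h
  simp only [mul_one, one_mul] at h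
  rw [h]
  congr 2
  ring

lemma key_map {a b : ℝ} (ha : 0 < a) (hb : 0 < b) :
    Measure.map (fun p : ℝ × ℝ => (p.1, Real.sqrt a * p.1 + p.2))
        ((gaussianReal 0 1).prod (gaussianReal 0 b.toNNReal))
      = Measure.map (fun p : ℝ × ℝ => (Real.sqrt a / (a + b) * p.1 + p.2, p.1))
        ((gaussianReal 0 (a + b).toNNReal).prod (gaussianReal 0 (b / (a + b)).toNNReal)) := by
  have hab : 0 < a + b := by positivity
  have hc : 0 < b / (a + b) := by positivity
  have h1ne : (1 : ℝ≥0) ≠ 0 := one_ne_zero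
  have hbne : b.toNNReal ≠ 0 := by rw [ne_eq, Real.toNNReal_eq_zero, not_le]; exact hb
  have habne : (a + b).toNNReal ≠ 0 := by rw [ne_eq, Real.toNNReal_eq_zero, not_le]; exact hab
  have hcne : (b / (a + b)).toNNReal ≠ 0 := by
    rw [ne_eq, Real.toNNReal_eq_zero, not_le]; exact hc
  have hm1 : Measurable fun p : ℝ × ℝ => (p.1, Real.sqrt a * p.1 + p.2) :=
    measurable_fst.prodMk ((measurable_fst.const_mul _).add measurable_snd)
  have hm2 : Measurable fun p : ℝ × ℝ => (Real.sqrt a / (a + b) * p.1 + p.2, p.1) :=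
    ((measurable_fst.const_mul _).add measurable_snd).prodMk measurable_fst
  ext S hS
  rw [Measure.map_apply hm1 hS, Measure.map_apply hm2 hS,
    Measure.prod_apply (hm1 hS), Measure.prod_apply (hm2 hS)]
  set F : ℝ × ℝ → ℝ≥0∞ := S.indicator fun _ => 1 with hF
  have hFmeas : Measurable F := measurable_const.indicator hS
  have hL : ∀ x : ℝ, (gaussianReal 0 b.toNNReal)
      (Prod.mk x ⁻¹' ((fun p : ℝ × ℝ => (p.1, Real.sqrt a * p.1 + p.2)) ⁻¹' S))
      = ∫⁻ s, F (x, s) * ENNReal.ofReal (gpdf b (s - Real.sqrt a * x)) := by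
    intro x
    have hpre : Prod.mk x ⁻¹' ((fun p : ℝ × ℝ => (p.1, Real.sqrt a * p.1 + p.2)) ⁻¹' S)
        = (fun r => Real.sqrt a * x + r) ⁻¹' (Prod.mk x ⁻¹' S) := rfl
    rw [hpre, ← Measure.map_apply (measurable_const_add _) (measurable_prodMk_left hS),
      gaussianReal_map_const_add, zero_add, gaussianReal_apply _ hbne,
      ← lintegral_indicator (measurable_prodMk_left hS) _]
    refine lintegral_congr fun s => ?_
    by_cases hmem : (x, s) ∈ S
    · have : s ∈ Prod.mk x ⁻¹' S := hmem
      rw [Set.indicator_of_mem this, hF, Set.indicator_of_mem hmem, one_mul,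
        gaussianPDF_eq_gpdf, Real.coe_toNNReal _ hb.le]
    · have : s ∉ Prod.mk x ⁻¹' S := hmem
      rw [Set.indicator_of_notMem this, hF, Set.indicator_of_notMem hmem, zero_mul]
  have hR : ∀ s : ℝ, (gaussianReal 0 (b / (a + b)).toNNReal)
      (Prod.mk s ⁻¹' ((fun p : ℝ × ℝ => (Real.sqrt a / (a + b) * p.1 + p.2, p.1)) ⁻¹' S))
      = ∫⁻ x, F (x, s) * ENNReal.ofReal (gpdf (b / (a + b))
          (x - Real.sqrt a / (a + b) * s)) := by
    intro s
    have hSs : MeasurableSet ((fun x : ℝ => (x, s)) ⁻¹' S) :=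
      (measurable_id.prodMk measurable_const) hS
    have hpre : Prod.mk s ⁻¹' ((fun p : ℝ × ℝ => (Real.sqrt a / (a + b) * p.1 + p.2, p.1)) ⁻¹' S)
        = (fun w => Real.sqrt a / (a + b) * s + w) ⁻¹' ((fun x : ℝ => (x, s)) ⁻¹' S) := rfl
    rw [hpre, ← Measure.map_apply (measurable_const_add _) hSs,
      gaussianReal_map_const_add, zero_add, gaussianReal_apply _ hcne,
      ← lintegral_indicator hSs _]
    refine lintegral_congr fun x => ?_
    by_cases hmem : (x, s) ∈ S
    · have : x ∈ (fun x : ℝ => (x, s)) ⁻¹' S := hmem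
      rw [Set.indicator_of_mem this, hF, Set.indicator_of_mem hmem, one_mul,
        gaussianPDF_eq_gpdf, Real.coe_toNNReal _ hc.le]
    · have : x ∉ (fun x : ℝ => (x, s)) ⁻¹' S := hmem
      rw [Set.indicator_of_notMem this, hF, Set.indicator_of_notMem hmem, zero_mul]
  rw [lintegral_congr hL, lintegral_congr hR]
  have hGb : Measurable fun q : ℝ × ℝ =>
      F q * ENNReal.ofReal (gpdf b (q.2 - Real.sqrt a * q.1)) :=
    hFmeas.mul ((measurable_gpdf _).comp
      (measurable_snd.sub (measurable_fst.const_mul _))).ennreal_ofReal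
  have hGc : Measurable fun q : ℝ × ℝ =>
      F (q.2, q.1) * ENNReal.ofReal (gpdf (b / (a + b))
        (q.2 - Real.sqrt a / (a + b) * q.1)) :=
    (hFmeas.comp (measurable_snd.prodMk measurable_fst)).mul ((measurable_gpdf _).comp
      (measurable_snd.sub (measurable_fst.const_mul _))).ennreal_ofReal
  have hmeasL : Measurable fun x : ℝ =>
      ∫⁻ s, F (x, s) * ENNReal.ofReal (gpdf b (s - Real.sqrt a * x)) :=
    Measurable.lintegral_prod_right hGb
  have hmeasR : Measurable fun s : ℝ =>
      ∫⁻ x, F (x, s) * ENNReal.ofReal (gpdf (b / (a + b))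
        (x - Real.sqrt a / (a + b) * s)) :=
    Measurable.lintegral_prod_right hGc
  rw [gaussianReal_withDensity h1ne, gaussianReal_withDensity habne,
    lintegral_withDensity_eq_lintegral_mul _ ((measurable_gpdf _).ennreal_ofReal) hmeasL,
    lintegral_withDensity_eq_lintegral_mul _ ((measurable_gpdf _).ennreal_ofReal) hmeasR]
  simp only [Pi.mul_apply, NNReal.coe_one]
  have hL2 : ∀ x : ℝ, ENNReal.ofReal (gpdf 1 x)
      * ∫⁻ s, F (x, s) * ENNReal.ofReal (gpdf b (s - Real.sqrt a * x))
      = ∫⁻ s, ENNReal.ofReal (gpdf 1 x)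
          * (F (x, s) * ENNReal.ofReal (gpdf b (s - Real.sqrt a * x))) := by
    intro x
    have hmi : Measurable fun s : ℝ =>
        F (x, s) * ENNReal.ofReal (gpdf b (s - Real.sqrt a * x)) :=
      (hFmeas.comp (measurable_const.prodMk measurable_id)).mul
        ((measurable_gpdf _).comp (measurable_id.sub measurable_const)).ennreal_ofReal
    exact (lintegral_const_mul _ hmi).symm
  have hR2 : ∀ s : ℝ, ENNReal.ofReal (gpdf (a + b) s)
      * ∫⁻ x, F (x, s) * ENNReal.ofReal (gpdf (b / (a + b)) (x - Real.sqrt a / (a + b) * s))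
      = ∫⁻ x, ENNReal.ofReal (gpdf (a + b) s)
          * (F (x, s) * ENNReal.ofReal (gpdf (b / (a + b))
              (x - Real.sqrt a / (a + b) * s))) := by
    intro s
    have hmi : Measurable fun x : ℝ =>
        F (x, s) * ENNReal.ofReal (gpdf (b / (a + b)) (x - Real.sqrt a / (a + b) * s)) :=
      (hFmeas.comp (measurable_id.prodMk measurable_const)).mul
        ((measurable_gpdf _).comp (measurable_id.sub measurable_const)).ennreal_ofReal
    exact (lintegral_const_mul _ hmi).symm
  rw [Real.coe_toNNReal _ hab.le]
  rw [lintegral_congr hL2, lintegral_congr hR2]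
  rw [lintegral_lintegral_swap]
  swap
  · exact ((((measurable_gpdf _).comp measurable_fst).ennreal_ofReal).mul
      (hFmeas.mul ((measurable_gpdf _).comp
        (measurable_snd.sub (measurable_fst.const_mul _))).ennreal_ofReal)).aemeasurable
  refine lintegral_congr fun s => lintegral_congr fun x => ?_
  rw [← mul_assoc, ← mul_assoc, mul_comm (ENNReal.ofReal (gpdf 1 x)) (F (x, s)),
    mul_comm (ENNReal.ofReal (gpdf (a + b) s)) (F (x, s)), mul_assoc, mul_assoc,
    ← ENNReal.ofReal_mul (gpdf_nonneg _ _), ← ENNReal.ofReal_mul (gpdf_nonneg _ _),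
    gauss_factor_sqrt ha hb]

lemma bounded_integrable {X : Type*} [MeasurableSpace X] (μ : Measure X) [IsFiniteMeasure μ]
    {u : X → ℝ} (hu : AEStronglyMeasurable u μ) {c : ℝ} (hc : ∀ x, |u x| ≤ c) :
    Integrable u μ :=
  Integrable.mono' (integrable_const c) hu (ae_of_all _ fun x => by simpa using hc x)

lemma sum_scaled_law {Ω : Type*} [MeasureSpace Ω] [IsProbabilityMeasure (ℙ : Measure Ω)]
    {T : ℕ} {ε : Fin T → Ω → ℝ} {v : Fin T → ℝ}
    (hmeas : ∀ i, Measurable (ε i))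
    (hindep : iIndepFun ε ℙ)
    (hgauss : ∀ i, Measure.map (ε i) ℙ = gaussianReal 0 1)
    (hv : ∀ i, 0 ≤ v i) (s : Finset (Fin T)) :
    Measure.map (fun ω => ∑ i ∈ s, Real.sqrt (v i) * ε i ω) ℙ
      = gaussianReal 0 (∑ i ∈ s, v i).toNNReal := by
  classical
  induction s using Finset.induction_on with
  | empty =>
      simp only [Finset.sum_empty]
      rw [Measure.map_const, measure_univ, one_smul, Real.toNNReal_zero, gaussianReal_zero_var]
  | @insert i s hi ih =>
      have hXlaw : Measure.map (fun ω => Real.sqrt (v i) * ε i ω) ℙ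
          = gaussianReal 0 (v i).toNNReal := by
        have h0 : Measure.map (fun ω => Real.sqrt (v i) * ε i ω) ℙ
            = Measure.map (fun x : ℝ => Real.sqrt (v i) * x) (Measure.map (ε i) ℙ) :=
          (Measure.map_map (measurable_const_mul _) (hmeas i)).symm
        rw [hgauss i, gaussianReal_map_const_mul, mul_zero] at h0
        have hvar : (⟨Real.sqrt (v i) ^ 2, sq_nonneg _⟩ : NNReal) * 1 = (v i).toNNReal := by
          rw [mul_one]
          apply NNReal.coe_injective
          simp [Real.sq_sqrt (hv i), Real.coe_toNNReal _ (hv i)]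
          rfl
        rw [h0]
        exact congrArg _ hvar
      have hiind : iIndepFun
          (fun k ω => Real.sqrt (v k) * ε k ω) ℙ :=
        hindep.comp (fun k (x : ℝ) => Real.sqrt (v k) * x) (fun k => measurable_const_mul _)
      have hind2 : IndepFun (fun ω => ∑ k ∈ s, Real.sqrt (v k) * ε k ω)
          (fun ω => Real.sqrt (v i) * ε i ω) ℙ := by
        have h1 := iIndepFun.indepFun_finsetSum_of_notMem hiind
          (fun k => (hmeas k).const_mul _) hi
        have hsum : (∑ k ∈ s, fun ω => Real.sqrt (v k) * ε k ω)
            = fun ω => ∑ k ∈ s, Real.sqrt (v k) * ε k ω := by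
          ext ω; simp
        rwa [hsum] at h1
      have hconv := gauss_conv ((hmeas i).const_mul _)
        (Finset.measurable_sum _ fun k _ => (hmeas k).const_mul _)
        hind2.symm hXlaw ih
      rw [← Real.toNNReal_add (hv i) (Finset.sum_nonneg fun k _ => hv k)] at hconv
      simp only [Finset.sum_insert hi]
      exact hconv

/-- For independent standard Gaussians `ε₁,…,ε_T`, positive weights `v₁,…,v_T` summing to `V`,
and `N = Σ √(vᵢ)·εᵢ − V/2`, the conditional expectation of `f(ε_j)` given `σ(N)` is `h(N)`
where `h(n) = E[f((√(v_j)/V)·(n + V/2) + Y_j)]` and `Y_j` is a centered Gaussian of variance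
`1 − v_j/V`. -/
theorem stmt8 {Ω : Type*} [MeasureSpace Ω] [IsProbabilityMeasure (ℙ : Measure Ω)]
    (T : ℕ) (hT : 1 ≤ T) (ε : Fin T → Ω → ℝ) (v : Fin T → ℝ)
    (hmeas : ∀ i, Measurable (ε i))
    (hindep : iIndepFun ε ℙ)
    (hgauss : ∀ i, Measure.map (ε i) ℙ = gaussianReal 0 1)
    (hv : ∀ i, 0 < v i)
    (V : ℝ) (hV : V = ∑ i, v i)
    (N : Ω → ℝ) (hN : N = fun ω => (∑ i, Real.sqrt (v i) * ε i ω) - V / 2)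
    (j : Fin T)
    (f : ℝ → ℝ) (hfm : Measurable f) (C : ℝ) (hfb : ∀ x, |f x| ≤ C)
    (h : ℝ → ℝ)
    (hh : h = fun n => ∫ y, f (Real.sqrt (v j) / V * (n + V / 2) + y)
        ∂(gaussianReal 0 (Real.toNNReal (1 - v j / V)))) :
    ℙ[(fun ω => f (ε j ω)) | MeasurableSpace.comap N (borel ℝ)]
      =ᵐ[ℙ] fun ω => h (N ω) := by
  classical
  have hC0 : 0 ≤ C := le_trans (abs_nonneg _) (hfb 0)
  have ha : 0 < v j := hv j
  set a : ℝ := v j with haa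
  set R : Ω → ℝ := fun ω => ∑ i ∈ Finset.univ.erase j, Real.sqrt (v i) * ε i ω with hRdef
  set b : ℝ := ∑ i ∈ Finset.univ.erase j, v i with hbdef
  have hb0 : 0 ≤ b := Finset.sum_nonneg fun k _ => (hv k).le
  have hVab : V = a + b := by
    rw [hV, hbdef, haa, ← Finset.add_sum_erase _ _ (Finset.mem_univ j)]
  have hVpos : 0 < V := by rw [hVab]; positivity
  have hNsplit : ∀ ω, N ω = Real.sqrt a * ε j ω + R ω - V / 2 := by
    intro ω
    rw [hN]
    simp only [hRdef, haa]
    rw [← Finset.add_sum_erase _ (fun i => Real.sqrt (v i) * ε i ω) (Finset.mem_univ j)]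
  have hNmeas : Measurable N := by
    rw [hN]
    exact (Finset.measurable_sum _ fun i _ => (hmeas i).const_mul _).sub measurable_const
  have hm : MeasurableSpace.comap N (borel ℝ) ≤ (inferInstance : MeasurableSpace Ω) :=
    hNmeas.comap_le
  haveI : SigmaFinite ((ℙ : Measure Ω).trim hm) := inferInstance
  have hhsm : StronglyMeasurable h := by
    rw [hh]
    exact MeasureTheory.StronglyMeasurable.integral_prod_right'
      (f := fun p : ℝ × ℝ => f (Real.sqrt (v j) / V * (p.1 + V / 2) + p.2))
      (hfm.comp
        (((measurable_fst.add_const _).const_mul _).add measurable_snd)).stronglyMeasurable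
  have hhb : ∀ n, |h n| ≤ C := by
    intro n
    rw [hh]
    have hle := norm_integral_le_of_norm_le_const
      (μ := gaussianReal 0 (Real.toNNReal (1 - v j / V))) (C := C)
      (f := fun y => f (Real.sqrt (v j) / V * (n + V / 2) + y))
      (ae_of_all _ fun y => by simpa using hfb _)
    simpa using hle
  have hmN : Measurable[MeasurableSpace.comap N (borel ℝ)] N := Measurable.of_comap_le le_rfl
  have hsmN : StronglyMeasurable[MeasurableSpace.comap N (borel ℝ)] (fun ω => h (N ω)) :=
    (hhsm.measurable.comp hmN).stronglyMeasurable
  have hint : Integrable (fun ω => f (ε j ω)) ℙ :=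
    bounded_integrable _ (hfm.comp (hmeas j)).aestronglyMeasurable (fun ω => hfb _)
  have hhNint : Integrable (fun ω => h (N ω)) ℙ :=
    bounded_integrable _ (hhsm.measurable.comp hNmeas).aestronglyMeasurable (fun ω => hhb _)
  rcases eq_or_lt_of_le hb0 with hb | hb
  · -- degenerate case : T = 1 essentially
    have herase : Finset.univ.erase j = ∅ := by
      rcases Finset.eq_empty_or_nonempty (Finset.univ.erase j) with he | he
      · exact he
      · exfalso
        have hpos : 0 < b := by
          rw [hbdef]; exact Finset.sum_pos (fun k _ => hv k) he
        linarith
    have hVa : V = a := by rw [hVab, ← hb, add_zero]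
    have hfeq : (fun ω => f (ε j ω)) = fun ω => h (N ω) := by
      funext ω
      rw [hh]
      have h1 : (1 : ℝ) - v j / V = 0 := by
        rw [← haa, hVa]; field_simp; norm_num
      rw [← haa] at h1
      simp only [h1, Real.toNNReal_zero, gaussianReal_zero_var, integral_dirac]
      have hRzero : R ω = 0 := by rw [hRdef]; simp [herase]
      have harg : Real.sqrt a / V * (N ω + V / 2) + 0 = ε j ω := by
        rw [hNsplit ω, hRzero, hVa]
        have hs : Real.sqrt a * Real.sqrt a = a := Real.mul_self_sqrt ha.le
        rw [show Real.sqrt a * ε j ω + 0 - a / 2 + a / 2 = Real.sqrt a * ε j ω by ring,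
          ← mul_assoc, div_mul_eq_mul_div, hs, div_self ha.ne', one_mul, add_zero]
      rw [harg]
    rw [hfeq, condExp_of_stronglyMeasurable hm hsmN hhNint]
  · -- main case
    have hRlaw : Measure.map R ℙ = gaussianReal 0 b.toNNReal := by
      rw [hRdef, hbdef]
      exact sum_scaled_law hmeas hindep hgauss (fun i => (hv i).le) _
    have hRmeas : Measurable R :=
      Finset.measurable_sum _ fun i _ => (hmeas i).const_mul _
    have hiind : iIndepFun
        (fun k ω => Real.sqrt (v k) * ε k ω) ℙ :=
      hindep.comp (fun k (x : ℝ) => Real.sqrt (v k) * x) (fun k => measurable_const_mul _)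
    have hind1 : IndepFun R (fun ω => Real.sqrt (v j) * ε j ω) ℙ := by
      have h1 := iIndepFun.indepFun_finsetSum_of_notMem hiind
        (fun k => (hmeas k).const_mul _) (Finset.notMem_erase j Finset.univ)
      have hsum : (∑ k ∈ Finset.univ.erase j, fun ω => Real.sqrt (v k) * ε k ω) = R := by
        ext ω; simp [hRdef]
      rwa [hsum] at h1
    have hsa : Real.sqrt a ≠ 0 := by positivity
    have hindjR : IndepFun (ε j) R ℙ := by
      have hcomp := hind1.comp measurable_id (measurable_const_mul (Real.sqrt a)⁻¹)
      have heq : ((fun x : ℝ => (Real.sqrt a)⁻¹ * x) ∘ (fun ω => Real.sqrt (v j) * ε j ω))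
          = ε j := by
        funext ω
        simp only [Function.comp_apply, ← haa]
        rw [← mul_assoc, inv_mul_cancel₀ hsa, one_mul]
      rw [heq] at hcomp
      exact hcomp.symm
    have hpair : Measure.map (fun ω => (ε j ω, R ω)) ℙ
        = (gaussianReal 0 1).prod (gaussianReal 0 b.toNNReal) := by
      rw [← hgauss j, ← hRlaw]
      exact (indepFun_iff_map_prod_eq_prod_map_map (hmeas j).aemeasurable
        hRmeas.aemeasurable).mp hindjR
    refine (ae_eq_condExp_of_forall_setIntegral_eq hm hint
      (fun s _ _ => hhNint.integrableOn) ?_ hsmN.aestronglyMeasurable).symm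
    intro s hs _
    obtain ⟨B, hB, rfl⟩ := hs
    set g : ℝ → ℝ := B.indicator fun _ => 1 with hgdef
    have hgmeas : Measurable g := measurable_const.indicator hB
    have hgb : ∀ x, |g x| ≤ 1 := by
      intro x
      rw [hgdef]
      by_cases hx : x ∈ B
      · simp [Set.indicator_of_mem hx]
      · simp [Set.indicator_of_notMem hx]
    have hset : ∀ u : Ω → ℝ, ∫ ω in N ⁻¹' B, u ω ∂ℙ = ∫ ω, u ω * g (N ω) ∂ℙ := by
      intro u
      rw [← integral_indicator (hNmeas hB)]
      refine integral_congr_ae (ae_of_all _ fun ω => ?_)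
      by_cases hω : N ω ∈ B
      · simp [Set.indicator, hgdef, hω]
      · simp [Set.indicator, hgdef, hω]
    -- measures and shears
    set μ2 : Measure (ℝ × ℝ) :=
      (gaussianReal 0 (a + b).toNNReal).prod (gaussianReal 0 (b / (a + b)).toNNReal) with hμ2
    set sh1 : ℝ × ℝ → ℝ × ℝ := fun p => (p.1, Real.sqrt a * p.1 + p.2) with hsh1def
    set sh2 : ℝ × ℝ → ℝ × ℝ := fun p => (Real.sqrt a / (a + b) * p.1 + p.2, p.1) with hsh2def
    have hsh1 : Measurable sh1 :=
      measurable_fst.prodMk ((measurable_fst.const_mul _).add measurable_snd)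
    have hsh2 : Measurable sh2 :=
      ((measurable_fst.const_mul _).add measurable_snd).prodMk measurable_fst
    have hpairmeas : Measurable (fun ω => (ε j ω, R ω)) := (hmeas j).prodMk hRmeas
    have step : ∀ Ψ : ℝ × ℝ → ℝ, Measurable Ψ →
        ∫ ω, Ψ (sh1 (ε j ω, R ω)) ∂ℙ = ∫ q, Ψ (sh2 q) ∂μ2 := by
      intro Ψ hΨ
      have h1 : ∫ ω, Ψ (sh1 (ε j ω, R ω)) ∂ℙ
          = ∫ q, Ψ (sh1 q) ∂((gaussianReal 0 1).prod (gaussianReal 0 b.toNNReal)) := by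
        rw [← hpair]
        exact (integral_map (f := fun q => Ψ (sh1 q)) hpairmeas.aemeasurable
          ((hΨ.comp hsh1).aestronglyMeasurable)).symm
      have h2 : ∫ q, Ψ (sh1 q) ∂((gaussianReal 0 1).prod (gaussianReal 0 b.toNNReal))
          = ∫ q, Ψ q ∂(Measure.map sh1 ((gaussianReal 0 1).prod (gaussianReal 0 b.toNNReal))) :=
        (integral_map hsh1.aemeasurable hΨ.aestronglyMeasurable).symm
      have h3 : ∫ q, Ψ q ∂(Measure.map sh2 μ2) = ∫ q, Ψ (sh2 q) ∂μ2 :=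
        integral_map hsh2.aemeasurable hΨ.aestronglyMeasurable
      rw [h1, h2, hsh1def, hμ2, hsh2def, key_map ha hb]
      exact integral_map (((measurable_fst.const_mul _).add
        measurable_snd).prodMk measurable_fst).aemeasurable hΨ.aestronglyMeasurable
    have hΨ1 : Measurable fun q : ℝ × ℝ => f q.1 * g (q.2 - V / 2) :=
      (hfm.comp measurable_fst).mul (hgmeas.comp (measurable_snd.sub measurable_const))
    have hΨ2 : Measurable fun q : ℝ × ℝ => h (q.2 - V / 2) * g (q.2 - V / 2) :=
      ((hhsm.measurable.comp (measurable_snd.sub measurable_const))).mul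
        (hgmeas.comp (measurable_snd.sub measurable_const))
    have hfN : ∫ ω in N ⁻¹' B, f (ε j ω) ∂ℙ
        = ∫ q, f (Real.sqrt a / (a + b) * q.1 + q.2) * g (q.1 - V / 2) ∂μ2 := by
      rw [hset]
      have hrw : (fun ω => f (ε j ω) * g (N ω))
          = fun ω => (fun q : ℝ × ℝ => f q.1 * g (q.2 - V / 2)) (sh1 (ε j ω, R ω)) := by
        funext ω
        simp only [hsh1def]
        rw [hNsplit ω]
      rw [hrw, step _ hΨ1]
    have hhN : ∫ ω in N ⁻¹' B, h (N ω) ∂ℙ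
        = ∫ q, h (q.1 - V / 2) * g (q.1 - V / 2) ∂μ2 := by
      rw [hset]
      have hrw : (fun ω => h (N ω) * g (N ω))
          = fun ω => (fun q : ℝ × ℝ => h (q.2 - V / 2) * g (q.2 - V / 2))
            (sh1 (ε j ω, R ω)) := by
        funext ω
        simp only [hsh1def]
        rw [hNsplit ω]
      rw [hrw, step _ hΨ2]
    rw [hfN, hhN]
    -- Fubini on μ2
    have hintf : Integrable
        (fun q : ℝ × ℝ => f (Real.sqrt a / (a + b) * q.1 + q.2) * g (q.1 - V / 2)) μ2 := by
      apply bounded_integrable _ ((hfm.comp ((measurable_fst.const_mul _).add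
        measurable_snd)).mul (hgmeas.comp (measurable_fst.sub
          measurable_const))).aestronglyMeasurable (c := C)
      intro q
      simp only [Pi.mul_apply, Function.comp_apply, abs_mul]
      calc |f _| * |g _| ≤ C * 1 :=
        mul_le_mul (hfb _) (hgb _) (abs_nonneg _) hC0
      _ = C := mul_one C
    have hinth : Integrable
        (fun q : ℝ × ℝ => h (q.1 - V / 2) * g (q.1 - V / 2)) μ2 := by
      apply bounded_integrable _ (((hhsm.measurable.comp (measurable_fst.sub
        measurable_const))).mul (hgmeas.comp (measurable_fst.sub
          measurable_const))).aestronglyMeasurable (c := C)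
      intro q
      simp only [Pi.mul_apply, Function.comp_apply, abs_mul]
      calc |h _| * |g _| ≤ C * 1 :=
        mul_le_mul (hhb _) (hgb _) (abs_nonneg _) hC0
      _ = C := mul_one C
    rw [hμ2, integral_prod _ hintf, integral_prod _ hinth]
    refine integral_congr_ae (ae_of_all _ fun s => ?_)
    simp only [Prod.fst, Prod.snd]
    have hsv : s - V / 2 + V / 2 = s := by ring
    have hab0 : a + b ≠ 0 := by positivity
    have e2 : 1 - a / V = b / (a + b) := by rw [hVab]; field_simp; ring
    have e1 : Real.sqrt a / V = Real.sqrt a / (a + b) := by rw [hVab]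
    have hid : h (s - V / 2)
        = ∫ y, f (Real.sqrt a / (a + b) * s + y)
            ∂(gaussianReal 0 (b / (a + b)).toNNReal) := by
      simp only [hh, hsv, e1, e2]
    rw [integral_const, probReal_univ, one_smul, hid,
      ← integral_mul_const]
end

section
/- Let ε₁, …, ε_T (T ≥ 2) be independent standard Gaussian random variables, let v₁, …, v_T > 0, set V = Σ_{i=1}^T v_i and N = Σ_{i=1}^T √(v_i)·ε_i − V/2. Let S, K > 0, let f : ℝ → ℝ be bounded and measurable, and let i ≠ j be two indices in {1, …, T}. Then S·E[f(ε_j)·(ε_i/√(v_i) − 1)·e^N·1_{N > ln(K/S)}] = K·E[f((√(v_j)/V)·(ln(K/S) + V/2) + Y_j)]·exp(−(ln(K/S) + V/2)²/(2V))/√(2πV), where Y_j is a centered Gaussian random variable with variance 1 − v_j/V. -/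
open Real MeasureTheory ProbabilityTheory Set

noncomputable section

/-- integral against gaussianReal as a Lebesgue integral against the density -/
lemma integral_gaussianReal_eq (m : ℝ) {w : NNReal} (hw : w ≠ 0) (g : ℝ → ℝ) :
    ∫ x, g x ∂(gaussianReal m w) = ∫ x, gaussianPDFReal m w x * g x := by
  rw [gaussianReal_of_var_ne_zero _ hw, gaussianPDF_def]
  have : (fun x => ENNReal.ofReal (gaussianPDFReal m w x))
      = fun x => ((Real.toNNReal (gaussianPDFReal m w x) : NNReal) : ENNReal) := by
    ext x; simp [ENNReal.ofReal]
  rw [this, integral_withDensity_eq_integral_smul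
    ((measurable_gaussianPDFReal m w).real_toNNReal) g]
  congr 1
  ext x
  simp [NNReal.smul_def, Real.coe_toNNReal _ (gaussianPDFReal_nonneg m w x)]

lemma L1 (d : ℝ) : ∫ u in Ioi d, u * Real.exp (-u ^ 2 / 2) = Real.exp (-d ^ 2 / 2) := by
  have hderiv : ∀ x ∈ Ici d, HasDerivAt (fun u : ℝ => -Real.exp (-u ^ 2 / 2))
      (x * Real.exp (-x ^ 2 / 2)) x := by
    intro x _
    have h1 : HasDerivAt (fun u : ℝ => -u ^ 2 / 2) (-x) x := by
      have := ((hasDerivAt_pow 2 x).neg).div_const 2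
      simpa using this.congr_deriv (by ring)
    have := (h1.exp).fun_neg
    simpa using this.congr_deriv (by ring)
  have hint : IntegrableOn (fun x : ℝ => x * Real.exp (-x ^ 2 / 2)) (Ioi d) := by
    have : Integrable (fun x : ℝ => x * Real.exp (-(1/2 : ℝ) * x ^ 2)) :=
      integrable_mul_exp_neg_mul_sq (by norm_num)
    have h2 : (fun x : ℝ => x * Real.exp (-(1/2 : ℝ) * x ^ 2))
        = fun x : ℝ => x * Real.exp (-x ^ 2 / 2) := by ext x; ring_nf
    rw [h2] at this
    exact this.integrableOn
  have htend : Filter.Tendsto (fun u : ℝ => -Real.exp (-u ^ 2 / 2)) Filter.atTop (nhds 0) := by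
    rw [← neg_zero]
    refine Filter.Tendsto.neg ?_
    refine Real.tendsto_exp_atBot.comp ?_
    have : Filter.Tendsto (fun u : ℝ => u ^ 2 / 2) Filter.atTop Filter.atTop :=
      (Filter.tendsto_pow_atTop two_ne_zero).atTop_div_const (by norm_num)
    have h2 := Filter.tendsto_neg_atTop_atBot.comp this
    simpa [Function.comp_def, neg_div] using h2
  have := integral_Ioi_of_hasDerivAt_of_tendsto' hderiv hint htend
  simpa using this


lemma hpdf01 (x : ℝ) : gaussianPDFReal 0 1 x = (Real.sqrt (2*π))⁻¹ * Real.exp (-x^2/2) := by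
  simp [gaussianPDFReal]

private lemma alg3 (s q m x : ℝ) (hs : 0 < s) :
    -x^2/2 + -(m - q*x)^2/(2*s)
      = -m^2/(2*(s+q^2)) + -((s+q^2)/(2*s))*(x - q*m/(s+q^2))^2 := by
  have h1 : s + q^2 > 0 := by positivity
  field_simp
  ring

lemma L2 {t : ℝ} (ht : 0 < t) (c : ℝ) :
    ∫ x, (x / Real.sqrt t - 1) * Real.exp (Real.sqrt t * x)
        * (if c < Real.sqrt t * x then (1:ℝ) else 0) ∂(gaussianReal 0 1)
    = Real.exp (t/2 - (c / Real.sqrt t - Real.sqrt t)^2/2) / (Real.sqrt t * Real.sqrt (2*π)) := by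
  have hst : 0 < Real.sqrt t := Real.sqrt_pos.2 ht
  set st := Real.sqrt t with hstdef
  have hst2 : st^2 = t := Real.sq_sqrt ht.le
  set d : ℝ := c / st - st with hd
  rw [integral_gaussianReal_eq 0 one_ne_zero]
  have key : ∀ x : ℝ, gaussianPDFReal 0 1 x
      * ((x / st - 1) * Real.exp (st * x) * (if c < st * x then (1:ℝ) else 0))
      = (fun u => ((Real.sqrt (2*π))⁻¹ * Real.exp (t/2))
          * (u / st * Real.exp (-u^2/2) * (if d < u then (1:ℝ) else 0))) (x - st) := by
    intro x
    have hite : (if c < st * x then (1:ℝ) else 0) = (if d < x - st then (1:ℝ) else 0) := by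
      refine if_congr ?_ rfl rfl
      rw [hd, sub_lt_sub_iff_right, div_lt_iff₀ hst, mul_comm]
    have e1 : Real.exp (-x^2/2) * Real.exp (st * x) = Real.exp (t/2) * Real.exp (-(x-st)^2/2) := by
      rw [← Real.exp_add, ← Real.exp_add]
      congr 1
      rw [← hst2]; ring
    rw [hpdf01, hite]
    calc (Real.sqrt (2*π))⁻¹ * Real.exp (-x^2/2)
          * ((x / st - 1) * Real.exp (st * x) * (if d < x - st then (1:ℝ) else 0))
        = ((x / st - 1) * (if d < x - st then (1:ℝ) else 0))
            * (Real.exp (-x^2/2) * Real.exp (st * x)) * (Real.sqrt (2*π))⁻¹ := by ring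
      _ = ((x / st - 1) * (if d < x - st then (1:ℝ) else 0))
            * (Real.exp (t/2) * Real.exp (-(x-st)^2/2)) * (Real.sqrt (2*π))⁻¹ := by rw [e1]
      _ = (fun u => ((Real.sqrt (2*π))⁻¹ * Real.exp (t/2))
            * (u / st * Real.exp (-u^2/2) * (if d < u then (1:ℝ) else 0))) (x - st) := by
          simp only []
          rw [show x / st - 1 = (x - st) / st by field_simp]; ring
  rw [integral_congr_ae (Filter.EventuallyEq.of_eq (funext key))]
  rw [integral_sub_right_eq_self (μ := volume)
    (fun u : ℝ => ((Real.sqrt (2*π))⁻¹ * Real.exp (t/2))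
      * (u / st * Real.exp (-u^2/2) * (if d < u then (1:ℝ) else 0))) st]
  rw [integral_const_mul]
  have : ∫ u : ℝ, u / st * Real.exp (-u^2/2) * (if d < u then (1:ℝ) else 0)
      = st⁻¹ * Real.exp (-d^2/2) := by
    have h1 : (fun u : ℝ => u / st * Real.exp (-u^2/2) * (if d < u then (1:ℝ) else 0))
        = fun u : ℝ => st⁻¹ * ((Ioi d).indicator (fun u : ℝ => u * Real.exp (-u^2/2)) u) := by
      ext u
      by_cases h : d < u
      · rw [if_pos h, Set.indicator_of_mem (Set.mem_Ioi.mpr h)]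
        try field_simp
        try ring
      · rw [if_neg h, Set.indicator_of_notMem (by simpa [Set.mem_Ioi] using h)]
        try ring
    rw [h1, integral_const_mul, integral_indicator measurableSet_Ioi, L1]
  rw [this]
  rw [Real.exp_sub]
  have h2π : (0:ℝ) < Real.sqrt (2*π) := Real.sqrt_pos.2 (by positivity)
  have h3 : Real.exp (-d^2/2) = (Real.exp (d^2/2))⁻¹ := by
    rw [← Real.exp_neg]; congr 1; ring
  rw [h3]
  field_simp

lemma L3 {s w : ℝ} (hs : 0 < s) (hw : 0 < w) (m : ℝ) :
    ∫ x, Real.exp (-(m - Real.sqrt w * x)^2/(2*s)) ∂(gaussianReal 0 1)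
    = Real.sqrt (s/(s+w)) * Real.exp (-m^2/(2*(s+w))) := by
  have hsw : 0 < Real.sqrt w := Real.sqrt_pos.2 hw
  have hsw2 : (Real.sqrt w)^2 = w := Real.sq_sqrt hw.le
  have hspw : 0 < s + w := by positivity
  rw [integral_gaussianReal_eq 0 one_ne_zero]
  have key : ∀ x : ℝ, gaussianPDFReal 0 1 x * Real.exp (-(m - Real.sqrt w * x)^2/(2*s))
      = ((Real.sqrt (2*π))⁻¹ * Real.exp (-m^2/(2*(s+w))))
        * (fun u : ℝ => Real.exp (-((s+w)/(2*s)) * u^2)) (x - Real.sqrt w * m / (s+w)) := by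
    intro x
    rw [hpdf01]
    simp only []
    rw [mul_assoc, ← Real.exp_add, mul_assoc, ← Real.exp_add]
    congr 1
    have e := alg3 s (Real.sqrt w) m x hs
    rw [hsw2] at e
    exact congrArg Real.exp e
  rw [integral_congr_ae (Filter.EventuallyEq.of_eq (funext key))]
  rw [integral_const_mul]
  rw [integral_sub_right_eq_self (μ := volume)
    (fun u : ℝ => Real.exp (-((s+w)/(2*s)) * u^2)) (Real.sqrt w * m / (s+w))]
  rw [integral_gaussian]
  have h1 : (Real.sqrt (2*π))⁻¹ * Real.sqrt (π / ((s+w)/(2*s))) = Real.sqrt (s/(s+w)) := by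
    rw [← Real.sqrt_inv, ← Real.sqrt_mul (by positivity)]
    congr 1
    field_simp
  calc (Real.sqrt (2*π))⁻¹ * Real.exp (-m^2/(2*(s+w))) * Real.sqrt (π / ((s+w)/(2*s)))
      = ((Real.sqrt (2*π))⁻¹ * Real.sqrt (π / ((s+w)/(2*s)))) * Real.exp (-m^2/(2*(s+w))) := by
        ring
    _ = _ := by rw [h1]

section Prob

variable {Ω : Type*} [MeasureSpace Ω] [IsProbabilityMeasure (ℙ : Measure Ω)]
    {T : ℕ} {ε : Fin T → Ω → ℝ} {v : Fin T → ℝ}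
    (hmeas : ∀ k, Measurable (ε k))
    (hindep : iIndepFun ε ℙ)
    (hgauss : ∀ k, Measure.map (ε k) ℙ = gaussianReal 0 1)
    (hv : ∀ k, 0 < v k)

include hmeas hindep in
/-- Independence of a weighted sum over `t` from `ε k`, `k ∉ t`. -/
lemma IND (t : Finset (Fin T)) (k : Fin T) (hk : k ∉ t) :
    IndepFun (fun ω => ∑ l ∈ t, Real.sqrt (v l) * ε l ω) (ε k) ℙ := by
  have h := hindep.indepFun_finset t {k} (Finset.disjoint_singleton_right.mpr hk) hmeas
  have hφ : Measurable (fun g : (↥t → ℝ) => ∑ l ∈ t.attach, Real.sqrt (v l.1) * g l) :=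
    Finset.measurable_sum _ (fun l _ => (measurable_pi_apply l).const_mul _)
  have hψ : Measurable (fun g : (↥({k} : Finset (Fin T)) → ℝ) =>
      g ⟨k, Finset.mem_singleton_self k⟩) := measurable_pi_apply _
  have h2 := h.comp hφ hψ
  have e1 : ((fun g : (↥t → ℝ) => ∑ l ∈ t.attach, Real.sqrt (v l.1) * g l)
      ∘ (fun a (i : ↥t) => ε i a)) = fun ω => ∑ l ∈ t, Real.sqrt (v l) * ε l ω := by
    ext ω
    simp only [Function.comp_apply]
    rw [← Finset.sum_attach t (fun l => Real.sqrt (v l) * ε l ω)]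
  have e2 : ((fun g : (↥({k} : Finset (Fin T)) → ℝ) => g ⟨k, Finset.mem_singleton_self k⟩)
      ∘ (fun a (i : ↥({k} : Finset (Fin T))) => ε i a)) = ε k := rfl
  rwa [e1, e2] at h2

lemma integrable_gaussianReal_iff {g : ℝ → ℝ} :
    Integrable g (gaussianReal 0 1) ↔
      Integrable (fun x => g x * gaussianPDFReal 0 1 x) volume := by
  rw [gaussianReal_of_var_ne_zero _ one_ne_zero,
    integrable_withDensity_iff (measurable_gaussianPDF _ _)
      (ae_of_all _ fun x => ENNReal.ofReal_lt_top)]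
  have : ∀ x : ℝ, (gaussianPDF 0 1 x).toReal = gaussianPDFReal 0 1 x :=
    fun x => ENNReal.toReal_ofReal (gaussianPDFReal_nonneg _ _ x)
  simp_rw [this]

lemma int_exp_shift (b : ℝ) : Integrable (fun x : ℝ => Real.exp (-(x - b)^2/2)) := by
  have h := (integrable_exp_neg_mul_sq (show (0:ℝ) < 1/2 by norm_num)).comp_sub_right b
  have : (fun x : ℝ => Real.exp (-(1/2 : ℝ) * (x - b)^2))
      = fun x : ℝ => Real.exp (-(x - b)^2/2) := by ext x; ring_nf
  rwa [this] at h

lemma int_mul_exp_shift (b : ℝ) : Integrable (fun x : ℝ => x * Real.exp (-(x - b)^2/2)) := by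
  have h1 : Integrable (fun u : ℝ => (u + b) * Real.exp (-u^2/2)) := by
    have ha : Integrable (fun u : ℝ => u * Real.exp (-u^2/2)) := by
      have := integrable_mul_exp_neg_mul_sq (show (0:ℝ) < 1/2 by norm_num)
      have e : (fun x : ℝ => x * Real.exp (-(1/2 : ℝ) * x^2))
          = fun x : ℝ => x * Real.exp (-x^2/2) := by ext x; ring_nf
      rwa [e] at this
    have hb : Integrable (fun u : ℝ => b * Real.exp (-u^2/2)) := by
      have := (integrable_exp_neg_mul_sq (show (0:ℝ) < 1/2 by norm_num)).const_mul b
      have e : (fun x : ℝ => b * Real.exp (-(1/2 : ℝ) * x^2))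
          = fun x : ℝ => b * Real.exp (-x^2/2) := by ext x; ring_nf
      rwa [e] at this
    exact (ha.add hb).congr (ae_of_all _ fun u => by simp [Pi.add_apply]; ring)
  have h2 := h1.comp_sub_right b
  have e : (fun x : ℝ => (x - b + b) * Real.exp (-(x - b)^2/2))
      = fun x : ℝ => x * Real.exp (-(x - b)^2/2) := by ext x; ring_nf
  rwa [e] at h2

lemma GEXP (c : ℝ) : Integrable (fun x => Real.exp (c * x)) (gaussianReal 0 1) := by
  rw [integrable_gaussianReal_iff]
  have key : (fun x : ℝ => Real.exp (c * x) * gaussianPDFReal 0 1 x)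
      = fun x : ℝ => ((Real.sqrt (2*π))⁻¹ * Real.exp (c^2/2)) * Real.exp (-(x - c)^2/2) := by
    ext x
    rw [hpdf01]
    rw [show (Real.sqrt (2*π))⁻¹ * Real.exp (-x^2/2) = (Real.sqrt (2*π))⁻¹ * Real.exp (-x^2/2)
      from rfl]
    rw [mul_comm (Real.exp (c*x)), mul_assoc, ← Real.exp_add, mul_assoc, ← Real.exp_add]
    congr 2
    ring
  rw [key]
  exact (int_exp_shift c).const_mul _

lemma GEXPABS (c : ℝ) : Integrable (fun x => |x| * Real.exp (c * x)) (gaussianReal 0 1) := by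
  rw [integrable_gaussianReal_iff]
  have h0 : Integrable (fun x : ℝ => x * Real.exp (c * x) * gaussianPDFReal 0 1 x) volume := by
    have key : (fun x : ℝ => x * Real.exp (c * x) * gaussianPDFReal 0 1 x)
        = fun x : ℝ => ((Real.sqrt (2*π))⁻¹ * Real.exp (c^2/2))
            * (x * Real.exp (-(x - c)^2/2)) := by
      ext x
      rw [hpdf01]
      have e1 : Real.exp (c * x) * Real.exp (-x^2/2)
          = Real.exp (c^2/2) * Real.exp (-(x - c)^2/2) := by
        rw [← Real.exp_add, ← Real.exp_add]; congr 1; ring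
      calc x * Real.exp (c * x) * ((Real.sqrt (2*π))⁻¹ * Real.exp (-x^2/2))
          = x * (Real.exp (c * x) * Real.exp (-x^2/2)) * (Real.sqrt (2*π))⁻¹ := by ring
        _ = x * (Real.exp (c^2/2) * Real.exp (-(x - c)^2/2)) * (Real.sqrt (2*π))⁻¹ := by
            rw [e1]
        _ = ((Real.sqrt (2*π))⁻¹ * Real.exp (c^2/2)) * (x * Real.exp (-(x - c)^2/2)) := by ring
    rw [key]
    exact (int_mul_exp_shift c).const_mul _
  have := h0.abs
  have e : (fun x : ℝ => |x * Real.exp (c * x) * gaussianPDFReal 0 1 x|)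
      = fun x : ℝ => |x| * Real.exp (c * x) * gaussianPDFReal 0 1 x := by
    ext x
    rw [abs_mul, abs_mul, abs_of_nonneg (Real.exp_pos _).le,
      abs_of_nonneg (gaussianPDFReal_nonneg _ _ _)]
  rwa [e] at this

set_option linter.unusedSectionVars false in
include hmeas hindep hgauss in
lemma SUMEXP (t : Finset (Fin T)) :
    Integrable (fun ω => Real.exp (∑ l ∈ t, Real.sqrt (v l) * ε l ω)) ℙ := by
  classical
  induction t using Finset.induction_on with
  | empty => simp [integrable_const]
  | @insert k t hk IH =>
    have hRt : Measurable (fun ω => ∑ l ∈ t, Real.sqrt (v l) * ε l ω) :=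
      Finset.measurable_sum _ (fun l _ => (hmeas l).const_mul _)
    have hind : IndepFun (fun ω => Real.exp (Real.sqrt (v k) * ε k ω))
        (fun ω => Real.exp (∑ l ∈ t, Real.sqrt (v l) * ε l ω)) ℙ := by
      have h := (IND (v := v) hmeas hindep t k hk).symm
      have h2 := h.comp (φ := fun x : ℝ => Real.exp (Real.sqrt (v k) * x))
        (ψ := Real.exp) ((measurable_id.const_mul _).exp) Real.measurable_exp
      exact h2
    have hX : Integrable (fun ω => Real.exp (Real.sqrt (v k) * ε k ω)) ℙ := by
      have h1 : Integrable (fun x => Real.exp (Real.sqrt (v k) * x)) (gaussianReal 0 1) :=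
        GEXP _
      rw [← hgauss k] at h1
      rw [integrable_map_measure h1.aestronglyMeasurable (hmeas k).aemeasurable] at h1
      exact h1
    have := hind.integrable_mul hX IH
    refine this.congr (ae_of_all _ fun ω => ?_)
    simp only [Pi.mul_apply]
    rw [Finset.sum_insert hk, Real.exp_add]

set_option linter.unusedSectionVars false in
include hmeas hindep hgauss hv in
lemma L4 (t : Finset (Fin T)) : ∀ s : ℝ, 0 < s → ∀ m : ℝ,
    ∫ ω, Real.exp (-(m - ∑ l ∈ t, Real.sqrt (v l) * ε l ω)^2/(2*s)) ∂ℙ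
    = Real.sqrt (s/(s + ∑ l ∈ t, v l)) * Real.exp (-m^2/(2*(s + ∑ l ∈ t, v l))) := by
  classical
  induction t using Finset.induction_on with
  | empty =>
    intro s hs m
    simp only [Finset.sum_empty, sub_zero, add_zero]
    rw [integral_const]
    simp [div_self hs.ne']
  | @insert k t hk IH =>
    intro s hs m
    have hRt : Measurable (fun ω => ∑ l ∈ t, Real.sqrt (v l) * ε l ω) :=
      Finset.measurable_sum _ (fun l _ => (hmeas l).const_mul _)
    set Rt : Ω → ℝ := fun ω => ∑ l ∈ t, Real.sqrt (v l) * ε l ω with hRtdef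
    have hindRt : IndepFun Rt (ε k) ℙ := IND hmeas hindep t k hk
    have hmap : Measure.map (fun ω => (Rt ω, ε k ω)) ℙ
        = (Measure.map Rt ℙ).prod (gaussianReal 0 1) := by
      rw [← hgauss k]
      exact (indepFun_iff_map_prod_eq_prod_map_map hRt.aemeasurable
        (hmeas k).aemeasurable).mp hindRt
    haveI : IsProbabilityMeasure (Measure.map Rt ℙ) :=
      Measure.isProbabilityMeasure_map hRt.aemeasurable
    set G : ℝ × ℝ → ℝ := fun p => Real.exp (-((m - p.1) - Real.sqrt (v k) * p.2)^2/(2*s))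
      with hGdef
    have hGmeas : Measurable G := by
      apply Measurable.exp
      exact ((((measurable_const.sub measurable_fst).sub
        (measurable_snd.const_mul _)).pow_const 2).neg.div_const _)
    have step1 : ∫ ω, Real.exp (-(m - ∑ l ∈ insert k t, Real.sqrt (v l) * ε l ω)^2/(2*s)) ∂ℙ
        = ∫ p, G p ∂((Measure.map Rt ℙ).prod (gaussianReal 0 1)) := by
      rw [← hmap,
        integral_map (hRt.aemeasurable.prodMk (hmeas k).aemeasurable)
          hGmeas.aestronglyMeasurable]
      refine integral_congr_ae (ae_of_all _ fun ω => ?_)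
      simp only [hGdef, Finset.sum_insert hk]
      congr 1
      ring
    have hGint : Integrable G ((Measure.map Rt ℙ).prod (gaussianReal 0 1)) := by
      refine (integrable_const (1:ℝ)).mono' hGmeas.aestronglyMeasurable
        (ae_of_all _ fun p => ?_)
      rw [Real.norm_eq_abs, abs_of_nonneg (Real.exp_pos _).le]
      refine Real.exp_le_one_iff.mpr ?_
      have h2s : (0:ℝ) < 2*s := by linarith
      have hnn : (0:ℝ) ≤ (m - p.1 - Real.sqrt (v k) * p.2)^2 / (2*s) :=
        div_nonneg (sq_nonneg _) h2s.le
      rw [neg_div]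
      exact neg_nonpos.mpr hnn
    rw [step1, integral_prod _ hGint]
    have inner : ∀ r : ℝ, ∫ x, G (r, x) ∂(gaussianReal 0 1)
        = Real.sqrt (s/(s + v k)) * Real.exp (-(m - r)^2/(2*(s + v k))) := by
      intro r
      simpa using L3 hs (hv k) (m - r)
    rw [integral_congr_ae (ae_of_all _ fun r => inner r)]
    rw [integral_const_mul]
    have hmapback : ∫ r, Real.exp (-(m - r)^2/(2*(s + v k))) ∂(Measure.map Rt ℙ)
        = ∫ ω, Real.exp (-(m - Rt ω)^2/(2*(s + v k))) ∂ℙ := by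
      rw [integral_map hRt.aemeasurable]
      exact (Measurable.aestronglyMeasurable (by
        exact (((measurable_const.sub measurable_id).pow_const 2).neg.div_const _).exp))
    have hsk : 0 < s + v k := by have := hv k; linarith
    rw [hmapback, IH (s + v k) hsk m]
    rw [Finset.sum_insert hk]
    have hW : (0:ℝ) ≤ ∑ l ∈ t, v l := Finset.sum_nonneg fun l _ => (hv l).le
    rw [← mul_assoc]
    have h1 : s + v k ≠ 0 := hsk.ne'
    have h2 : (0:ℝ) < s + (v k + ∑ l ∈ t, v l) := by linarith [hv k]
    congr 1
    · rw [← Real.sqrt_mul (div_nonneg hs.le hsk.le)]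
      congr 1
      have h3 : (0:ℝ) < (s + v k) * (s + v k + ∑ l ∈ t, v l) := mul_pos hsk (by linarith)
      rw [div_mul_div_comm, div_eq_div_iff h3.ne' h2.ne']
      ring
    · rw [← add_assoc]

end Prob

private lemma alg1 (q a Vv u r : ℝ) (hq : q ≠ 0) :
    u + r - Vv/2 + (q^2/2 - ((a + Vv/2 - u - r)/q - q)^2/2)
    = a + -((a + Vv/2 - u) - r)^2/(2*q^2) := by
  field_simp
  ring

private lemma alg2 (q Vv a y : ℝ) (hU : 0 < Vv - q^2) (hV : 0 < Vv) :
    -y^2/2 + -(a + Vv/2 - q*y)^2/(2*(Vv - q^2))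
    = -(a + Vv/2)^2/(2*Vv) + -(y - q/Vv*(a + Vv/2))^2/(2*((Vv - q^2)/Vv)) := by
  have h1 : Vv - q^2 ≠ 0 := hU.ne'
  have h2 : Vv ≠ 0 := hV.ne'
  field_simp
  ring

private lemma algc {vi U Vv : ℝ} (hvi : 0 < vi) (hU : 0 < U) (hV : 0 < Vv) :
    (Real.sqrt (2*π))⁻¹ * (Real.sqrt vi * Real.sqrt (2*π))⁻¹ * Real.sqrt (vi/U)
      = (Real.sqrt (2*π*Vv))⁻¹ * (Real.sqrt (2*π*(U/Vv)))⁻¹ := by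
  have h2π : (0:ℝ) < 2*π := by positivity
  have hs2π : (0:ℝ) < Real.sqrt (2*π) := Real.sqrt_pos.2 h2π
  have hsvi : (0:ℝ) < Real.sqrt vi := Real.sqrt_pos.2 hvi
  have hsU : (0:ℝ) < Real.sqrt U := Real.sqrt_pos.2 hU
  have hsV : (0:ℝ) < Real.sqrt Vv := Real.sqrt_pos.2 hV
  have e1 : Real.sqrt (vi/U) = Real.sqrt vi / Real.sqrt U := Real.sqrt_div hvi.le U
  have e2 : Real.sqrt (2*π*Vv) = Real.sqrt (2*π) * Real.sqrt Vv := Real.sqrt_mul h2π.le Vv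
  have e3 : Real.sqrt (2*π*(U/Vv)) = Real.sqrt (2*π) * (Real.sqrt U / Real.sqrt Vv) := by
    rw [Real.sqrt_mul h2π.le, Real.sqrt_div hU.le]
  rw [e1, e2, e3]
  have h4 : Real.sqrt (2*π) * Real.sqrt (2*π) = 2*π := Real.mul_self_sqrt h2π.le
  field_simp

/-- For independent standard Gaussians `ε₁,…,ε_T`, positive weights `v₁,…,v_T` summing to `V`,
`N = Σ √(vᵢ)·εᵢ − V/2`, a bounded measurable `f` and indices `i ≠ j`:
`S·E[f(ε_j)·(ε_i/√(v_i) − 1)·e^N·1_{N > ln(K/S)}]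
  = K·E[f((√(v_j)/V)·(ln(K/S) + V/2) + Y_j)]·exp(−(ln(K/S)+V/2)²/(2V))/√(2πV)`,
where `Y_j` is a centered Gaussian of variance `1 − v_j/V`. -/
theorem stmt9 {Ω : Type*} [MeasureSpace Ω] [IsProbabilityMeasure (ℙ : Measure Ω)]
    (T : ℕ) (hT : 2 ≤ T) (ε : Fin T → Ω → ℝ) (v : Fin T → ℝ)
    (hmeas : ∀ k, Measurable (ε k))
    (hindep : iIndepFun ε ℙ)
    (hgauss : ∀ k, Measure.map (ε k) ℙ = gaussianReal 0 1)
    (hv : ∀ k, 0 < v k)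
    (V : ℝ) (hV : V = ∑ k, v k)
    (N : Ω → ℝ) (hN : N = fun ω => (∑ k, Real.sqrt (v k) * ε k ω) - V / 2)
    (S K : ℝ) (hS : 0 < S) (hK : 0 < K)
    (f : ℝ → ℝ) (hfm : Measurable f) (C : ℝ) (hfb : ∀ x, |f x| ≤ C)
    (i j : Fin T) (hij : i ≠ j) :
    S * ∫ ω, f (ε j ω) * (ε i ω / Real.sqrt (v i) - 1) * Real.exp (N ω)
          * (if Real.log (K / S) < N ω then (1 : ℝ) else 0) =
      K * (∫ y, f (Real.sqrt (v j) / V * (Real.log (K / S) + V / 2) + y)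
            ∂(gaussianReal 0 (Real.toNNReal (1 - v j / V))))
        * Real.exp (-(Real.log (K / S) + V / 2) ^ 2 / (2 * V))
        / Real.sqrt (2 * Real.pi * V) := by
  classical
  set a : ℝ := Real.log (K / S) with ha
  set s : Finset (Fin T) := Finset.univ \ {i, j} with hsdef
  set R : Ω → ℝ := fun ω => ∑ l ∈ s, Real.sqrt (v l) * ε l ω with hRdef
  set W : ℝ := ∑ l ∈ s, v l with hWdef
  have hmeasR : Measurable R := Finset.measurable_sum _ (fun l _ => (hmeas l).const_mul _)
  have hWnn : 0 ≤ W := Finset.sum_nonneg fun l _ => (hv l).le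
  have hvi := hv i
  have hvj := hv j
  have his : i ∉ s := by simp [hsdef]
  have hjs : j ∉ s := by simp [hsdef]
  have hjis : j ∉ insert i s := by
    simp [Finset.mem_insert, hjs, hij.symm]
  -- sum decomposition
  have hsum : ∀ g : Fin T → ℝ, ∑ k, g k = g j + (g i + ∑ k ∈ s, g k) := by
    intro g
    have h1 : (Finset.univ : Finset (Fin T)) = insert j (insert i s) := by
      ext k
      by_cases hki : k = i <;> by_cases hkj : k = j <;>
        simp [hsdef, Finset.mem_insert, Finset.mem_sdiff, hki, hkj]
    rw [h1, Finset.sum_insert hjis, Finset.sum_insert his]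
  have hVdec : V = v j + (v i + W) := by rw [hV, hWdef]; exact hsum v
  have hVpos : 0 < V := by rw [hVdec]; linarith
  have hNsum : ∀ ω, N ω = Real.sqrt (v j) * ε j ω + (R ω + Real.sqrt (v i) * ε i ω) - V/2 := by
    intro ω
    rw [hN]
    simp only []
    rw [hsum (fun k => Real.sqrt (v k) * ε k ω)]
    ring
  -- the triple map
  have hindRi : IndepFun R (ε i) ℙ := IND (v := v) hmeas hindep s i his
  have hpair : IndepFun (ε j) (fun ω => (R ω, ε i ω)) ℙ := by
    have h := hindep.indepFun_finset {j} (insert i s)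
      (Finset.disjoint_singleton_left.mpr hjis) hmeas
    have hψ : Measurable (fun gg : (↥(insert i s) → ℝ) =>
        ((∑ l ∈ s.attach, Real.sqrt (v l.1) * gg ⟨l.1, Finset.mem_insert_of_mem l.2⟩),
          gg ⟨i, Finset.mem_insert_self i s⟩)) := by
      refine Measurable.prodMk ?_ (measurable_pi_apply _)
      exact Finset.measurable_sum _ (fun l _ => (measurable_pi_apply _).const_mul _)
    have h2 := h.comp (φ := fun gg : (↥({j} : Finset (Fin T)) → ℝ) =>
      gg ⟨j, Finset.mem_singleton_self j⟩) (measurable_pi_apply _ : Measurable (fun gg : (↥({j} : Finset (Fin T)) → ℝ) =>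
      gg ⟨j, Finset.mem_singleton_self j⟩)) hψ
    have e1 : ((fun gg : (↥({j} : Finset (Fin T)) → ℝ) => gg ⟨j, Finset.mem_singleton_self j⟩)
        ∘ (fun ω (l : ↥({j} : Finset (Fin T))) => ε l ω)) = ε j := rfl
    have e2 : ((fun gg : (↥(insert i s) → ℝ) =>
        ((∑ l ∈ s.attach, Real.sqrt (v l.1) * gg ⟨l.1, Finset.mem_insert_of_mem l.2⟩),
          gg ⟨i, Finset.mem_insert_self i s⟩))
        ∘ (fun ω (l : ↥(insert i s)) => ε l ω)) = fun ω => (R ω, ε i ω) := by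
      ext ω
      · simp only [Function.comp_apply, hRdef]
        rw [← Finset.sum_attach s (fun l => Real.sqrt (v l) * ε l ω)]
      · rfl
    rwa [e1, e2] at h2
  haveI hprobR : IsProbabilityMeasure (Measure.map R ℙ) :=
    Measure.isProbabilityMeasure_map hmeasR.aemeasurable
  have hmapP : Measure.map (fun ω => (ε j ω, (R ω, ε i ω))) ℙ
      = (gaussianReal 0 1).prod ((Measure.map R ℙ).prod (gaussianReal 0 1)) := by
    have h1 := (indepFun_iff_map_prod_eq_prod_map_map (hmeas j).aemeasurable
      (hmeasR.prodMk (hmeas i)).aemeasurable).mp hpair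
    have h2 := (indepFun_iff_map_prod_eq_prod_map_map hmeasR.aemeasurable
      (hmeas i).aemeasurable).mp hindRi
    rw [h1, h2, hgauss j, hgauss i]
  -- the integrand as a function on ℝ × (ℝ × ℝ)
  set g : ℝ × (ℝ × ℝ) → ℝ := fun p =>
    f p.1 * (p.2.2 / Real.sqrt (v i) - 1)
      * Real.exp (Real.sqrt (v j) * p.1 + (p.2.1 + Real.sqrt (v i) * p.2.2) - V/2)
      * (if a < Real.sqrt (v j) * p.1 + (p.2.1 + Real.sqrt (v i) * p.2.2) - V/2 then (1:ℝ) else 0)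
    with hgdef
  have hlin : Measurable (fun p : ℝ × (ℝ × ℝ) =>
      Real.sqrt (v j) * p.1 + (p.2.1 + Real.sqrt (v i) * p.2.2) - V/2) :=
    (((measurable_fst.const_mul _).add
      ((measurable_snd.fst).add (measurable_snd.snd.const_mul _))).sub_const _)
  have hgmeas : Measurable g := by
    refine (((hfm.comp measurable_fst).mul
      ((measurable_snd.snd.div_const _).sub_const 1)).mul hlin.exp).mul ?_
    exact Measurable.ite (measurableSet_lt measurable_const hlin)
      measurable_const measurable_const
  -- step 1 : write the LHS integral over the product measure
  have step1 : ∫ ω, f (ε j ω) * (ε i ω / Real.sqrt (v i) - 1) * Real.exp (N ω)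
        * (if a < N ω then (1:ℝ) else 0) ∂ℙ
      = ∫ p, g p ∂((gaussianReal 0 1).prod ((Measure.map R ℙ).prod (gaussianReal 0 1))) := by
    rw [← hmapP, integral_map ((hmeas j).aemeasurable.prodMk
      (hmeasR.aemeasurable.prodMk (hmeas i).aemeasurable)) hgmeas.aestronglyMeasurable]
    refine integral_congr_ae (ae_of_all _ fun ω => ?_)
    simp only [hgdef]
    rw [hNsum ω]
  -- positivity facts
  have hsipos : 0 < Real.sqrt (v i) := Real.sqrt_pos.2 hvi
  have hsjpos : 0 < Real.sqrt (v j) := Real.sqrt_pos.2 hvj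
  have hsi2 : (Real.sqrt (v i))^2 = v i := Real.sq_sqrt hvi.le
  have hsj2 : (Real.sqrt (v j))^2 = v j := Real.sq_sqrt hvj.le
  have hC : 0 ≤ C := le_trans (abs_nonneg _) (hfb 0)
  have hUpos : 0 < v i + W := by linarith
  -- integrable bounds
  set B1 : ℝ → ℝ := fun y => C * Real.exp (Real.sqrt (v j) * y) with hB1def
  set B2 : ℝ → ℝ := fun r => Real.exp r * Real.exp (-(V/2)) with hB2def
  set B3 : ℝ → ℝ := fun x => (|x| / Real.sqrt (v i) + 1) * Real.exp (Real.sqrt (v i) * x)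
    with hB3def
  have hB1 : Integrable B1 (gaussianReal 0 1) := (GEXP _).const_mul C
  have hB2 : Integrable B2 (Measure.map R ℙ) := by
    have h1 : Integrable (fun ω => Real.exp (∑ l ∈ s, Real.sqrt (v l) * ε l ω)) ℙ :=
      SUMEXP (v := v) hmeas hindep hgauss s
    have h2 : Integrable (fun r => Real.exp r) (Measure.map R ℙ) := by
      rw [integrable_map_measure (Measurable.aestronglyMeasurable (by exact Real.measurable_exp))
        hmeasR.aemeasurable]
      exact h1
    exact h2.mul_const _
  have hB3 : Integrable B3 (gaussianReal 0 1) := by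
    have h1 : Integrable (fun x : ℝ => (Real.sqrt (v i))⁻¹
        * (|x| * Real.exp (Real.sqrt (v i) * x))
        + Real.exp (Real.sqrt (v i) * x)) (gaussianReal 0 1) :=
      ((GEXPABS _).const_mul _).add (GEXP _)
    refine h1.congr (ae_of_all _ fun x => ?_)
    simp only [hB3def]
    field_simp
  have hbound : ∀ p : ℝ × (ℝ × ℝ), ‖g p‖ ≤ B1 p.1 * (B2 p.2.1 * B3 p.2.2) := by
    intro p
    obtain ⟨y, r, x⟩ := p
    simp only [hgdef, hB1def, hB2def, hB3def, Real.norm_eq_abs]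
    have hE : Real.exp (Real.sqrt (v j) * y + (r + Real.sqrt (v i) * x) - V/2)
        = Real.exp (Real.sqrt (v j) * y) * (Real.exp r * Real.exp (-(V/2))
          * Real.exp (Real.sqrt (v i) * x)) := by
      rw [← Real.exp_add, ← Real.exp_add, ← Real.exp_add]
      congr 1
      ring
    have h1 : |f y * (x / Real.sqrt (v i) - 1)
          * Real.exp (Real.sqrt (v j) * y + (r + Real.sqrt (v i) * x) - V/2)
          * (if a < Real.sqrt (v j) * y + (r + Real.sqrt (v i) * x) - V/2 then (1:ℝ) else 0)|
        = |f y| * |x / Real.sqrt (v i) - 1|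
          * Real.exp (Real.sqrt (v j) * y + (r + Real.sqrt (v i) * x) - V/2)
          * |if a < Real.sqrt (v j) * y + (r + Real.sqrt (v i) * x) - V/2 then (1:ℝ) else 0| := by
      rw [abs_mul, abs_mul, abs_mul, abs_of_nonneg (Real.exp_pos _).le]
    rw [h1]
    have h2 : |x / Real.sqrt (v i) - 1| ≤ |x| / Real.sqrt (v i) + 1 := by
      refine le_trans (abs_sub _ _) ?_
      rw [abs_div, abs_of_nonneg hsipos.le, abs_one]
    have h3 : |if a < Real.sqrt (v j) * y + (r + Real.sqrt (v i) * x) - V/2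
        then (1:ℝ) else 0| ≤ 1 := by
      split <;> simp
    calc |f y| * |x / Real.sqrt (v i) - 1|
          * Real.exp (Real.sqrt (v j) * y + (r + Real.sqrt (v i) * x) - V/2)
          * |if a < Real.sqrt (v j) * y + (r + Real.sqrt (v i) * x) - V/2 then (1:ℝ) else 0|
        ≤ C * (|x| / Real.sqrt (v i) + 1)
          * Real.exp (Real.sqrt (v j) * y + (r + Real.sqrt (v i) * x) - V/2) * 1 := by
          gcongr <;> first | exact hfb y | exact h2 | exact h3
      _ = C * Real.exp (Real.sqrt (v j) * y)
          * (Real.exp r * Real.exp (-(V/2))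
            * ((|x| / Real.sqrt (v i) + 1) * Real.exp (Real.sqrt (v i) * x))) := by
          rw [hE]; ring
  have hint : Integrable g
      ((gaussianReal 0 1).prod ((Measure.map R ℙ).prod (gaussianReal 0 1))) :=
    (hB1.mul_prod (hB2.mul_prod hB3)).mono' hgmeas.aestronglyMeasurable
      (ae_of_all _ hbound)
  have hint2 : ∀ y : ℝ, Integrable (fun q : ℝ × ℝ => g (y, q))
      ((Measure.map R ℙ).prod (gaussianReal 0 1)) := by
    intro y
    refine (((hB2.mul_prod hB3).const_mul (B1 y)).mono'
      ((hgmeas.comp (measurable_prodMk_left)).aestronglyMeasurable)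
      (ae_of_all _ fun q => ?_))
    exact hbound (y, q)
  -- inner-most integral over x
  have step3a : ∀ y r : ℝ, ∫ x, g (y, (r, x)) ∂(gaussianReal 0 1)
      = (f y * Real.exp (Real.sqrt (v j) * y + r - V/2))
        * (Real.exp ((v i)/2 - ((a + V/2 - Real.sqrt (v j) * y - r) / Real.sqrt (v i)
            - Real.sqrt (v i))^2/2) / (Real.sqrt (v i) * Real.sqrt (2*π))) := by
    intro y r
    have hcong : ∀ x : ℝ, g (y, (r, x))
        = (f y * Real.exp (Real.sqrt (v j) * y + r - V/2))
          * ((x / Real.sqrt (v i) - 1) * Real.exp (Real.sqrt (v i) * x)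
            * (if (a + V/2 - Real.sqrt (v j) * y - r) < Real.sqrt (v i) * x
                then (1:ℝ) else 0)) := by
      intro x
      simp only [hgdef]
      have hif : (if a < Real.sqrt (v j) * y + (r + Real.sqrt (v i) * x) - V/2
          then (1:ℝ) else 0)
          = (if (a + V/2 - Real.sqrt (v j) * y - r) < Real.sqrt (v i) * x
              then (1:ℝ) else 0) := by
        refine if_congr ?_ rfl rfl
        constructor <;> intro h <;> linarith
      have hexp : Real.exp (Real.sqrt (v j) * y + (r + Real.sqrt (v i) * x) - V/2)
          = Real.exp (Real.sqrt (v j) * y + r - V/2) * Real.exp (Real.sqrt (v i) * x) := by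
        rw [← Real.exp_add]; congr 1; ring
      rw [hif, hexp]
      ring
    rw [integral_congr_ae (ae_of_all _ hcong), integral_const_mul, L2 hvi _]
  have step3b : ∀ y r : ℝ,
      (f y * Real.exp (Real.sqrt (v j) * y + r - V/2))
        * (Real.exp ((v i)/2 - ((a + V/2 - Real.sqrt (v j) * y - r) / Real.sqrt (v i)
            - Real.sqrt (v i))^2/2) / (Real.sqrt (v i) * Real.sqrt (2*π)))
      = (f y * Real.exp a / (Real.sqrt (v i) * Real.sqrt (2*π)))
        * Real.exp (-((a + V/2 - Real.sqrt (v j) * y) - r)^2/(2*(v i))) := by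
    intro y r
    have e := alg1 (Real.sqrt (v i)) a V (Real.sqrt (v j) * y) r hsipos.ne'
    rw [hsi2] at e
    calc (f y * Real.exp (Real.sqrt (v j) * y + r - V/2))
          * (Real.exp ((v i)/2 - ((a + V/2 - Real.sqrt (v j) * y - r) / Real.sqrt (v i)
              - Real.sqrt (v i))^2/2) / (Real.sqrt (v i) * Real.sqrt (2*π)))
        = (f y / (Real.sqrt (v i) * Real.sqrt (2*π)))
          * Real.exp ((Real.sqrt (v j) * y + r - V/2)
            + ((v i)/2 - ((a + V/2 - Real.sqrt (v j) * y - r) / Real.sqrt (v i)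
              - Real.sqrt (v i))^2/2)) := by
          rw [Real.exp_add]; ring
      _ = (f y / (Real.sqrt (v i) * Real.sqrt (2*π)))
          * Real.exp (a + -((a + V/2 - Real.sqrt (v j) * y) - r)^2/(2*(v i))) := by rw [e]
      _ = _ := by rw [Real.exp_add]; ring
  -- integral over q = (r, x)
  have step3 : ∀ y : ℝ, ∫ q : ℝ × ℝ, g (y, q) ∂((Measure.map R ℙ).prod (gaussianReal 0 1))
      = f y * Real.exp a / (Real.sqrt (v i) * Real.sqrt (2*π))
        * (Real.sqrt ((v i)/((v i) + W))
          * Real.exp (-(a + V/2 - Real.sqrt (v j) * y)^2/(2*((v i) + W)))) := by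
    intro y
    rw [integral_prod _ (hint2 y)]
    have h1 : ∀ r : ℝ, ∫ x, g (y, (r, x)) ∂(gaussianReal 0 1)
        = (f y * Real.exp a / (Real.sqrt (v i) * Real.sqrt (2*π)))
          * Real.exp (-((a + V/2 - Real.sqrt (v j) * y) - r)^2/(2*(v i))) := by
      intro r
      rw [step3a y r, step3b y r]
    rw [integral_congr_ae (ae_of_all _ h1), integral_const_mul]
    congr 1
    have h2 : ∫ r, Real.exp (-((a + V/2 - Real.sqrt (v j) * y) - r)^2/(2*(v i)))
          ∂(Measure.map R ℙ)
        = ∫ ω, Real.exp (-((a + V/2 - Real.sqrt (v j) * y) - R ω)^2/(2*(v i))) ∂ℙ := by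
      rw [integral_map hmeasR.aemeasurable]
      exact Measurable.aestronglyMeasurable (by
        exact (((measurable_const.sub measurable_id).pow_const 2).neg.div_const _).exp)
    rw [h2]
    have h3 := L4 (v := v) hmeas hindep hgauss hv s (v i) hvi (a + V/2 - Real.sqrt (v j) * y)
    simp only [hRdef]
    rw [h3, ← hWdef]
  -- final pointwise identity in y
  have hVj : V - v j = v i + W := by linarith [hVdec]
  set c₀ : ℝ := Real.sqrt (v j)/V * (a + V/2) with hc0
  set σt : NNReal := Real.toNNReal (1 - v j/V) with hσt
  have h0σ : (0:ℝ) ≤ 1 - v j/V := by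
    rw [sub_nonneg, div_le_one hVpos]
    linarith
  have hσcoe : (σt : ℝ) = ((v i) + W)/V := by
    rw [hσt, Real.coe_toNNReal _ h0σ, eq_div_iff hVpos.ne']
    field_simp
    linarith
  have hσne : σt ≠ 0 := by
    have hpos : (0:ℝ) < (σt : ℝ) := by rw [hσcoe]; positivity
    intro h
    rw [h] at hpos
    simp at hpos
  have hpdfσ : ∀ y, gaussianPDFReal c₀ σt y
      = (Real.sqrt (2*π*(((v i) + W)/V)))⁻¹ * Real.exp (-(y - c₀)^2/(2*(((v i) + W)/V))) := by
    intro y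
    rw [gaussianPDFReal, hσcoe]
  have step5 : ∀ y : ℝ, gaussianPDFReal 0 1 y
        * (f y * Real.exp a / (Real.sqrt (v i) * Real.sqrt (2*π))
          * (Real.sqrt ((v i)/((v i) + W))
            * Real.exp (-(a + V/2 - Real.sqrt (v j) * y)^2/(2*((v i) + W)))))
      = (Real.exp a * Real.exp (-(a + V/2)^2/(2*V)) / Real.sqrt (2*π*V))
        * (gaussianPDFReal c₀ σt y * f y) := by
    intro y
    rw [hpdf01, hpdfσ]
    have e := alg2 (Real.sqrt (v j)) V a y (by rw [hsj2]; linarith) hVpos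
    rw [hsj2, hVj, ← hc0] at e
    have hcst := algc (vi := v i) (U := (v i) + W) (Vv := V) hvi hUpos hVpos
    calc (Real.sqrt (2*π))⁻¹ * Real.exp (-y^2/2)
          * (f y * Real.exp a / (Real.sqrt (v i) * Real.sqrt (2*π))
            * (Real.sqrt ((v i)/((v i) + W))
              * Real.exp (-(a + V/2 - Real.sqrt (v j) * y)^2/(2*((v i) + W)))))
        = (f y * Real.exp a)
            * ((Real.sqrt (2*π))⁻¹ * (Real.sqrt (v i) * Real.sqrt (2*π))⁻¹
              * Real.sqrt ((v i)/((v i) + W)))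
            * Real.exp (-y^2/2 + -(a + V/2 - Real.sqrt (v j) * y)^2/(2*((v i) + W))) := by
          rw [Real.exp_add]
          field_simp
      _ = (f y * Real.exp a)
            * ((Real.sqrt (2*π*V))⁻¹ * (Real.sqrt (2*π*(((v i) + W)/V)))⁻¹)
            * Real.exp (-(a + V/2)^2/(2*V) + -(y - c₀)^2/(2*(((v i) + W)/V))) := by
          rw [hcst, e]
      _ = (Real.exp a * Real.exp (-(a + V/2)^2/(2*V)) / Real.sqrt (2*π*V))
            * (((Real.sqrt (2*π*(((v i) + W)/V)))⁻¹
              * Real.exp (-(y - c₀)^2/(2*(((v i) + W)/V)))) * f y) := by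
          rw [Real.exp_add]
          ring
  have step7 : ∫ y, gaussianPDFReal c₀ σt y * f y
      = ∫ y, f (c₀ + y) ∂(gaussianReal 0 σt) := by
    rw [← integral_gaussianReal_eq c₀ hσne f]
    have hmap2 : (gaussianReal 0 σt).map (fun y => c₀ + y) = gaussianReal c₀ σt := by
      have h := gaussianReal_map_const_add (μ := 0) (v := σt) c₀
      simpa using h
    rw [← hmap2, integral_map (measurable_const_add c₀).aemeasurable
      hfm.aestronglyMeasurable]
  -- assemble everything
  rw [step1, integral_prod _ hint, integral_congr_ae (ae_of_all _ step3),
    integral_gaussianReal_eq 0 one_ne_zero, integral_congr_ae (ae_of_all _ step5),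
    integral_const_mul, step7]
  have hea : Real.exp a = K/S := by rw [ha, Real.exp_log (div_pos hK hS)]
  rw [hea]
  field_simp
end
end

section
/- Let ε₁, …, ε_T (T ≥ 2) be independent standard Gaussian random variables, let v₁, …, v_T > 0, set V = Σ_{i=1}^T v_i and N = Σ_{i=1}^T √(v_i)·ε_i − V/2. Let f : ℝ → ℝ be bounded and measurable, let λ_j^i (1 ≤ j < i ≤ T) be real coefficients, set ξ_i = Σ_{j=1}^{i−1} λ_j^i·f(ε_j) and Ñ = (1/2)·Σ_{i=1}^T ξ_i·(ε_i/√(v_i) − 1). Fix S, K > 0 and define F(ν) = E[(S·e^{N + ν·Ñ} − K)₊]. Then F is differentiable at ν = 0 with F'(0) = S·E[Ñ·e^N·1_{N > ln(K/S)}]. -/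
open Real MeasureTheory ProbabilityTheory

lemma aux_gauss_exp_int (t : ℝ) :
    Integrable (fun x => Real.exp (t * x)) (gaussianReal 0 1) := by
  rw [gaussianReal_of_var_ne_zero 0 one_ne_zero]
  rw [integrable_withDensity_iff (measurable_gaussianPDF 0 1)
    (Filter.Eventually.of_forall fun x => ENNReal.ofReal_lt_top)]
  have heq : (fun x => Real.exp (t * x) * (gaussianPDF 0 1 x).toReal)
      = fun x => ((Real.sqrt (2 * π))⁻¹ * Real.exp (t^2/2))
          * Real.exp (-(2⁻¹) * (x - t)^2) := by
    ext x
    rw [gaussianPDF, ENNReal.toReal_ofReal (gaussianPDFReal_nonneg 0 1 x), gaussianPDFReal]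
    simp only [NNReal.coe_one, mul_one]
    rw [mul_left_comm, ← Real.exp_add, mul_assoc, ← Real.exp_add]
    congr 1
    ring_nf
  rw [heq]
  exact ((integrable_exp_neg_mul_sq (by norm_num : (0:ℝ) < 2⁻¹)).comp_sub_right t).const_mul _

lemma aux_integrable_prod {Ω : Type*} [MeasureSpace Ω] [IsProbabilityMeasure (ℙ : Measure Ω)]
    {n : ℕ} (Z : Fin n → Ω → ℝ) (hind : iIndepFun Z ℙ)
    (hm : ∀ i, Measurable (Z i)) (hint : ∀ i, Integrable (Z i) ℙ) (s : Finset (Fin n)) :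
    Integrable (fun ω => ∏ i ∈ s, Z i ω) ℙ := by
  classical
  induction s using Finset.induction_on with
  | empty => simpa using integrable_const (1 : ℝ)
  | @insert i s hi ih =>
    have h1 : IndepFun (∏ j ∈ s, Z j) (Z i) ℙ :=
      hind.indepFun_finsetProd_of_notMem hm hi
    have ih' : Integrable (∏ j ∈ s, Z j) ℙ := by
      have : (∏ j ∈ s, Z j) = fun ω => ∏ j ∈ s, Z j ω := by
        ext ω; simp
      rw [this]; exact ih
    have hmul := h1.symm.integrable_mul (hint i) ih'
    have heq : (fun ω => ∏ j ∈ insert i s, Z j ω) = Z i * ∏ j ∈ s, Z j := by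
      ext ω; simp [Finset.prod_insert hi]
    rw [heq]; exact hmul

/-- Differentiability of the option price in the vol-of-vol at `ν = 0`:
`F(ν) = E[(S·e^{N + ν·Ñ} − K)₊]` satisfies `F'(0) = S·E[Ñ·e^N·1_{N > ln(K/S)}]`. -/
theorem stmt11 {Ω : Type*} [MeasureSpace Ω] [IsProbabilityMeasure (ℙ : Measure Ω)]
    (T : ℕ) (hT : 2 ≤ T) (ε : Fin T → Ω → ℝ) (v : Fin T → ℝ)
    (hmeas : ∀ k, Measurable (ε k))
    (hindep : iIndepFun ε ℙ)
    (hgauss : ∀ k, Measure.map (ε k) ℙ = gaussianReal 0 1)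
    (hv : ∀ k, 0 < v k)
    (V : ℝ) (hV : V = ∑ k, v k)
    (N : Ω → ℝ) (hN : N = fun ω => (∑ k, Real.sqrt (v k) * ε k ω) - V / 2)
    (f : ℝ → ℝ) (hfm : Measurable f) (C : ℝ) (hfb : ∀ x, |f x| ≤ C)
    (lam : Fin T → Fin T → ℝ)
    (ξ : Fin T → Ω → ℝ)
    (hξ : ξ = fun i ω => ∑ j ∈ Finset.Iio i, lam j i * f (ε j ω))
    (Ntil : Ω → ℝ)
    (hNtil : Ntil = fun ω => (1 / 2) * ∑ i, ξ i ω * (ε i ω / Real.sqrt (v i) - 1))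
    (S K : ℝ) (hS : 0 < S) (hK : 0 < K)
    (F : ℝ → ℝ)
    (hF : F = fun ν => ∫ ω, max (S * Real.exp (N ω + ν * Ntil ω) - K) 0) :
    HasDerivAt F
      (S * ∫ ω, Ntil ω * Real.exp (N ω)
          * (if Real.log (K / S) < N ω then (1 : ℝ) else 0)) 0 := by
  classical
  set c : ℝ := Real.log (K / S) with hc
  -- measurability
  have hNm : Measurable N := by
    rw [hN]
    exact (Finset.measurable_sum _ fun k _ => (hmeas k).const_mul _).sub measurable_const
  have hξm : ∀ i, Measurable (ξ i) := by
    intro i; rw [hξ]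
    exact Finset.measurable_sum _ fun j _ => ((hfm.comp (hmeas j)).const_mul _)
  have hNtm : Measurable Ntil := by
    rw [hNtil]
    exact (Finset.measurable_sum _ fun i _ =>
      (hξm i).mul (((hmeas i).div_const _).sub measurable_const)).const_mul _
  -- single exponential integrability
  have h1 : ∀ (k : Fin T) (t : ℝ), Integrable (fun ω => Real.exp (t * ε k ω)) ℙ := by
    intro k t
    have hG := aux_gauss_exp_int t
    rw [← hgauss k] at hG
    exact (integrable_map_measure
      (Measurable.aestronglyMeasurable (by fun_prop))
      (hmeas k).aemeasurable).mp hG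
  -- exponential of linear combinations
  have hexp : ∀ s : Fin T → ℝ, Integrable (fun ω => Real.exp (∑ i, s i * ε i ω)) ℙ := by
    intro s
    have hii : iIndepFun (fun i ω => s i * ε i ω) ℙ :=
      hindep.comp (fun i x => s i * x) (fun i => measurable_const_mul _)
    have := hii.integrable_exp_mul_sum (t := 1)
      (fun i => (hmeas i).const_mul _) (s := Finset.univ)
      (fun i _ => by simpa [one_mul] using h1 i (s i))
    simpa [one_mul] using this
  -- bounds
  have hC : 0 ≤ C := le_trans (abs_nonneg _) (hfb 0)
  set A : Fin T → ℝ := fun i => ∑ j ∈ Finset.Iio i, |lam j i| * C with hA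
  have hA0 : ∀ i, 0 ≤ A i := fun i =>
    Finset.sum_nonneg fun j _ => mul_nonneg (abs_nonneg _) hC
  have hξb : ∀ i ω, |ξ i ω| ≤ A i := by
    intro i ω
    rw [hξ]
    refine (Finset.abs_sum_le_sum_abs _ _).trans (Finset.sum_le_sum fun j _ => ?_)
    rw [abs_mul]
    exact mul_le_mul_of_nonneg_left (hfb _) (abs_nonneg _)
  set D : Ω → ℝ := fun ω => (1/2) * ∑ i, A i * (|ε i ω| / Real.sqrt (v i) + 1) with hD
  have hNtb : ∀ ω, |Ntil ω| ≤ D ω := by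
    intro ω
    rw [hNtil, hD]
    simp only
    rw [abs_mul, abs_of_nonneg (by norm_num : (0:ℝ) ≤ 1/2)]
    refine mul_le_mul_of_nonneg_left ?_ (by norm_num)
    refine (Finset.abs_sum_le_sum_abs _ _).trans (Finset.sum_le_sum fun i _ => ?_)
    rw [abs_mul]
    refine mul_le_mul (hξb i ω) ?_ (abs_nonneg _) (hA0 i)
    calc |ε i ω / Real.sqrt (v i) - 1|
        ≤ |ε i ω / Real.sqrt (v i)| + |(-1 : ℝ)| := by
          rw [sub_eq_add_neg]; exact abs_add_le _ _
      _ = |ε i ω| / Real.sqrt (v i) + 1 := by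
          rw [abs_div, abs_of_pos (Real.sqrt_pos.mpr (hv i)), abs_neg, abs_one]
  -- the independent factors
  set Z : Fin T → Ω → ℝ := fun i ω =>
    Real.exp (Real.sqrt (v i) * ε i ω + (A i / Real.sqrt (v i)) * |ε i ω|) with hZ
  have hZm : ∀ i, Measurable (Z i) := fun i =>
    (((hmeas i).const_mul _).add ((hmeas i).abs.const_mul _)).exp
  have hZint : ∀ i, Integrable (Z i) ℙ := by
    intro i
    set b := Real.sqrt (v i)
    set d := A i / Real.sqrt (v i) with hd
    have hd0 : 0 ≤ d := div_nonneg (hA0 i) (Real.sqrt_nonneg _)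
    refine ((h1 i (b + d)).add (h1 i (b - d))).mono' ((hZm i).aestronglyMeasurable)
      (Filter.Eventually.of_forall fun ω => ?_)
    rw [hZ]
    simp only [Real.norm_eq_abs, abs_of_pos (Real.exp_pos _)]
    rcases le_or_gt 0 (ε i ω) with h | h
    · rw [abs_of_nonneg h]
      calc Real.exp (b * ε i ω + d * ε i ω) = Real.exp ((b + d) * ε i ω) := by ring_nf
        _ ≤ _ := le_add_of_nonneg_right (Real.exp_pos _).le
    · rw [abs_of_neg h]
      calc Real.exp (b * ε i ω + d * -ε i ω) = Real.exp ((b - d) * ε i ω) := by ring_nf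
        _ ≤ _ := le_add_of_nonneg_left (Real.exp_pos _).le
  have hZind : iIndepFun Z ℙ :=
    hindep.comp (fun i x => Real.exp (Real.sqrt (v i) * x + (A i / Real.sqrt (v i)) * |x|))
      (fun i => ((measurable_const_mul _).add (measurable_abs.const_mul _)).exp)
  have hprod : Integrable (fun ω => ∏ i, Z i ω) ℙ :=
    aux_integrable_prod Z hZind hZm hZint Finset.univ
  -- exp(N + 2D) equals a constant times the product
  have hkey : ∀ ω, Real.exp (N ω + 2 * D ω)
      = Real.exp ((∑ i, A i) - V / 2) * ∏ i, Z i ω := by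
    intro ω
    rw [← Real.exp_sum, ← Real.exp_add, hN, hD]
    simp only
    have h2 : ∀ i : Fin T, A i * (|ε i ω| / Real.sqrt (v i) + 1)
        = (A i / Real.sqrt (v i)) * |ε i ω| + A i := by
      intro i
      have : Real.sqrt (v i) ≠ 0 := (Real.sqrt_pos.mpr (hv i)).ne'
      field_simp
    congr 1
    rw [Finset.sum_congr rfl (fun i _ => h2 i), Finset.sum_add_distrib,
      Finset.sum_add_distrib]
    ring
  -- the dominating (Lipschitz) bound
  set bound : Ω → ℝ := fun ω => S * (Real.exp (N ω + |Ntil ω|) * |Ntil ω|) with hbdef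
  have hbm : Measurable bound := (((hNm.add hNtm.abs).exp.mul hNtm.abs).const_mul S)
  have hb_nonneg : ∀ ω, 0 ≤ bound ω := fun ω =>
    mul_nonneg hS.le (mul_nonneg (Real.exp_pos _).le (abs_nonneg _))
  have hb_le : ∀ ω, bound ω ≤ (S * Real.exp ((∑ i, A i) - V / 2)) * ∏ i, Z i ω := by
    intro ω
    rw [mul_assoc, ← hkey ω, hbdef]
    refine mul_le_mul_of_nonneg_left ?_ hS.le
    calc Real.exp (N ω + |Ntil ω|) * |Ntil ω|
        ≤ Real.exp (N ω + |Ntil ω|) * Real.exp (|Ntil ω|) :=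
          mul_le_mul_of_nonneg_left
            (by linarith [Real.add_one_le_exp (|Ntil ω|), abs_nonneg (Ntil ω)])
            (Real.exp_pos _).le
      _ = Real.exp (N ω + 2 * |Ntil ω|) := by rw [← Real.exp_add]; ring_nf
      _ ≤ Real.exp (N ω + 2 * D ω) := by
          apply Real.exp_le_exp.mpr
          have := hNtb ω
          linarith
  have hbint : Integrable bound ℙ := by
    refine (hprod.const_mul (S * Real.exp ((∑ i, A i) - V / 2))).mono'
      hbm.aestronglyMeasurable (Filter.Eventually.of_forall fun ω => ?_)
    rw [Real.norm_eq_abs, abs_of_nonneg (hb_nonneg ω)]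
    exact hb_le ω
  -- integrability of e^N
  have heN : Integrable (fun ω => Real.exp (N ω)) ℙ := by
    rw [hN]
    simp only [Real.exp_sub]
    exact (hexp fun i => Real.sqrt (v i)).div_const _
  -- integrability at ν = 0
  have hF_int : Integrable (fun ω => max (S * Real.exp (N ω + (0:ℝ) * Ntil ω) - K) 0) ℙ := by
    refine (heN.const_mul S).mono'
      (((((hNm.add (hNtm.const_mul 0)).exp.const_mul S).sub_const K).max
        measurable_const).aestronglyMeasurable)
      (Filter.Eventually.of_forall fun ω => ?_)
    rw [Real.norm_eq_abs, abs_of_nonneg (le_max_right _ _)]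
    simp only [zero_mul, add_zero]
    exact max_le (by linarith [Real.exp_pos (N ω), hK]) (by positivity)
  -- the null set where N = c
  have hnull : ∀ᵐ ω ∂(ℙ : Measure Ω), N ω ≠ c := by
    have hT0 : 0 < T := by omega
    set i0 : Fin T := ⟨0, hT0⟩
    set Y : Fin T → Ω → ℝ := fun k ω => Real.sqrt (v k) * ε k ω with hY
    have hYm : ∀ k, Measurable (Y k) := fun k => (hmeas k).const_mul _
    have hYind : iIndepFun Y ℙ :=
      hindep.comp (fun k x => Real.sqrt (v k) * x) (fun k => measurable_const_mul _)
    set R : Ω → ℝ := fun ω => ∑ k ∈ Finset.univ.erase i0, Y k ω with hR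
    have hRm : Measurable R := Finset.measurable_sum _ fun k _ => hYm k
    have hind2 : IndepFun R (Y i0) ℙ := by
      have := hYind.indepFun_finsetSum_of_notMem hYm (Finset.notMem_erase i0 Finset.univ)
      have hfun : (∑ k ∈ Finset.univ.erase i0, Y k) = R := by
        ext ω; simp [hR]
      rwa [hfun] at this
    -- the law of Y i0 has no atoms
    have hmap : Measure.map (Y i0) ℙ
        = gaussianReal (Real.sqrt (v i0) * 0)
            (⟨(Real.sqrt (v i0))^2, sq_nonneg _⟩ * 1) := by
      have : Y i0 = (fun x => Real.sqrt (v i0) * x) ∘ ε i0 := rfl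
      rw [this, ← Measure.map_map (measurable_const_mul _) (hmeas i0), hgauss i0,
        gaussianReal_map_const_mul]
      rfl
    have hatom : ∀ x : ℝ, Measure.map (Y i0) ℙ {x} = 0 := by
      intro x
      rw [hmap]
      have hvar : (⟨(Real.sqrt (v i0))^2, sq_nonneg _⟩ * 1 : NNReal) ≠ 0 := by
        simp only [mul_one, ne_eq, ← NNReal.coe_inj, NNReal.coe_zero, NNReal.coe_mk]
        intro h
        change (Real.sqrt (v i0))^2 * 1 = 0 at h
        have := Real.sqrt_pos.mpr (hv i0)
        nlinarith [Real.sq_sqrt (hv i0).le]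
      exact gaussianReal_absolutelyContinuous _ hvar (measure_singleton x)
    -- conclude
    rw [Filter.eventually_iff, mem_ae_iff]
    have hset : {ω | N ω ≠ c}ᶜ = {ω | R ω + Y i0 ω = c + V / 2} := by
      ext ω
      simp only [Set.mem_compl_iff, Set.mem_setOf_eq, not_not, hN, hR, hY]
      constructor
      · intro h
        rw [← Finset.add_sum_erase _ _ (Finset.mem_univ i0)] at h
        linarith [h]
      · intro h
        rw [← Finset.add_sum_erase _ _ (Finset.mem_univ i0)]
        linarith [h]
    rw [hset]
    set a : ℝ := c + V / 2
    have hsm : MeasurableSet {p : ℝ × ℝ | p.1 + p.2 = a} :=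
      (measurable_fst.add measurable_snd) (measurableSet_singleton a)
    have hpre : {ω | R ω + Y i0 ω = a} = (fun ω => (R ω, Y i0 ω)) ⁻¹' {p | p.1 + p.2 = a} := rfl
    rw [hpre, ← Measure.map_apply (hRm.prodMk (hYm i0)) hsm]
    rw [(indepFun_iff_map_prod_eq_prod_map_map hRm.aemeasurable
      (hYm i0).aemeasurable).mp hind2]
    rw [Measure.prod_apply hsm]
    have hslice : ∀ r : ℝ, (Prod.mk r ⁻¹' {p : ℝ × ℝ | p.1 + p.2 = a}) = {a - r} := by
      intro r
      ext x
      simp only [Set.mem_preimage, Set.mem_setOf_eq, Set.mem_singleton_iff]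
      constructor <;> intro h <;> linarith
    simp only [hslice, hatom]
    simp
  -- pointwise derivative data
  set G : ℝ → Ω → ℝ := fun ν ω => max (S * Real.exp (N ω + ν * Ntil ω) - K) 0 with hG
  set Fd : Ω → ℝ := fun ω =>
    S * (Ntil ω * Real.exp (N ω) * (if c < N ω then (1:ℝ) else 0)) with hFd
  have hd : ∀ (ω : Ω) (ν : ℝ), HasDerivAt (fun t => S * Real.exp (N ω + t * Ntil ω) - K)
      (S * (Real.exp (N ω + ν * Ntil ω) * Ntil ω)) ν := by
    intro ω ν
    have h0 : HasDerivAt (fun t : ℝ => N ω + t * Ntil ω) (Ntil ω) ν := by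
      simpa using ((hasDerivAt_id ν).mul_const (Ntil ω)).const_add (N ω)
    exact (h0.exp.const_mul S).sub_const K
  have h_diff : ∀ᵐ ω ∂(ℙ : Measure Ω), HasDerivAt (fun ν => G ν ω) (Fd ω) 0 := by
    filter_upwards [hnull] with ω hω
    rcases lt_or_gt_of_ne hω with h | h
    · -- N ω < c : locally zero
      have hneg : S * Real.exp (N ω + 0 * Ntil ω) - K < 0 := by
        have h1 : Real.exp (N ω) < K / S := (Real.lt_log_iff_exp_lt (div_pos hK hS)).mp h
        have h2 : Real.exp (N ω) * S < K := (lt_div_iff₀ hS).mp h1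
        simp only [zero_mul, add_zero]
        linarith [h2, mul_comm S (Real.exp (N ω))]
      have hev : (fun ν => G ν ω) =ᶠ[nhds 0] (fun _ => (0:ℝ)) := by
        have hcont := (hd ω 0).continuousAt
        filter_upwards [hcont.tendsto.eventually (eventually_lt_nhds hneg)] with ν hν
        exact max_eq_right hν.le
      have hder : HasDerivAt (fun ν => G ν ω) 0 0 :=
        (hasDerivAt_const (0:ℝ) (0:ℝ)).congr_of_eventuallyEq hev
      convert hder using 1
      rw [hFd]
      simp only [if_neg (not_lt.mpr h.le)]
      ring
    · -- c < N ω : locally equal to the smooth function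
      have hpos : 0 < S * Real.exp (N ω + 0 * Ntil ω) - K := by
        have h1 : K / S < Real.exp (N ω) := (Real.log_lt_iff_lt_exp (div_pos hK hS)).mp h
        have h2 : K < Real.exp (N ω) * S := (div_lt_iff₀ hS).mp h1
        simp only [zero_mul, add_zero]
        linarith [h2, mul_comm S (Real.exp (N ω))]
      have hev : (fun ν => G ν ω)
          =ᶠ[nhds 0] (fun ν => S * Real.exp (N ω + ν * Ntil ω) - K) := by
        have hcont := (hd ω 0).continuousAt
        filter_upwards [hcont.tendsto.eventually (eventually_gt_nhds hpos)] with ν hν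
        exact max_eq_left hν.le
      have hder := (hd ω 0).congr_of_eventuallyEq hev
      refine hder.congr_deriv ?_
      rw [hFd]
      simp only [if_pos h, zero_mul, add_zero]
      ring
  -- Lipschitz bounds
  have h_lip : ∀ᵐ ω ∂(ℙ : Measure Ω),
      LipschitzOnWith (Real.nnabs (bound ω)) (fun ν => G ν ω) (Metric.ball (0:ℝ) 1) := by
    refine Filter.Eventually.of_forall fun ω => ?_
    have hlip1 : LipschitzOnWith (Real.nnabs (bound ω))
        (fun ν => S * Real.exp (N ω + ν * Ntil ω) - K) (Metric.ball (0:ℝ) 1) := by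
      refine (convex_ball (0:ℝ) 1).lipschitzOnWith_of_nnnorm_hasDerivWithin_le
        (fun ν _ => (hd ω ν).hasDerivWithinAt) (fun ν hν => ?_)
      rw [← NNReal.coe_le_coe, coe_nnnorm, Real.coe_nnabs, Real.norm_eq_abs,
        abs_of_nonneg (hb_nonneg ω)]
      have hν1 : |ν| ≤ 1 := by
        have := mem_ball_zero_iff.mp hν
        rw [Real.norm_eq_abs] at this
        linarith
      have h1 : ν * Ntil ω ≤ |Ntil ω| := by
        calc ν * Ntil ω ≤ |ν * Ntil ω| := le_abs_self _
          _ = |ν| * |Ntil ω| := abs_mul _ _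
          _ ≤ 1 * |Ntil ω| := mul_le_mul_of_nonneg_right hν1 (abs_nonneg _)
          _ = |Ntil ω| := one_mul _
      have h2 : |S * (Real.exp (N ω + ν * Ntil ω) * Ntil ω)|
          = S * (Real.exp (N ω + ν * Ntil ω) * |Ntil ω|) := by
        rw [abs_mul, abs_mul, abs_of_pos hS, abs_of_pos (Real.exp_pos _)]
      rw [h2, hbdef]
      refine mul_le_mul_of_nonneg_left ?_ hS.le
      exact mul_le_mul_of_nonneg_right
        (Real.exp_le_exp.mpr (by linarith)) (abs_nonneg _)
    have hmax : LipschitzWith 1 (fun x : ℝ => max x 0) := LipschitzWith.id.max_const 0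
    have := hmax.comp_lipschitzOnWith hlip1
    rwa [one_mul] at this
  -- measurability of the family and the derivative
  have hF_meas : ∀ᶠ ν in nhds (0:ℝ), AEStronglyMeasurable (G ν) ℙ :=
    Filter.Eventually.of_forall fun ν =>
      ((((hNm.add (hNtm.const_mul ν)).exp.const_mul S).sub_const K).max
        measurable_const).aestronglyMeasurable
  have hFd_meas : AEStronglyMeasurable Fd ℙ := by
    refine Measurable.aestronglyMeasurable ?_
    rw [hFd]
    exact ((hNtm.mul hNm.exp).mul
      (Measurable.ite (measurableSet_lt measurable_const hNm)
        measurable_const measurable_const)).const_mul S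
  -- apply the parametric differentiation theorem
  have key := hasDerivAt_integral_of_dominated_loc_of_lip
    (μ := (ℙ : Measure Ω)) (F := G) (x₀ := (0:ℝ)) (bound := bound)
    (Metric.ball_mem_nhds 0 one_pos) hF_meas hF_int hFd_meas h_lip hbint h_diff
  have hderiv := key.2
  rw [hF]
  have hval : ∫ ω, Fd ω ∂(ℙ : Measure Ω)
      = S * ∫ ω, Ntil ω * Real.exp (N ω) * (if c < N ω then (1:ℝ) else 0) := by
    rw [hFd]
    exact integral_const_mul _ _
  rw [← hval]
  exact hderiv
end

section
/- Let ε₁, …, ε_T (T ≥ 1) be independent standard Gaussian random variables on a probability space with filtration F_i = σ(ε₁, …, ε_i), F₀ trivial. Let σ₁, …, σ_T be bounded random variables such that σ_i is F_{i−1}-measurable for each i, and set r_i = σ_i·ε_i. Then E[(Σ_{i=1}^T r_i)³] = 3·Σ_{i=2}^T Σ_{j=1}^{i−1} E[r_j·σ_i²]. -/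
open Real MeasureTheory ProbabilityTheory Filter
open scoped ENNReal NNReal

namespace Stmt12Aux

lemma pdf_eq (x : ℝ) : gaussianPDFReal 0 1 x
    = (Real.sqrt (2 * π))⁻¹ * Real.exp (-(1/2) * x ^ 2) := by
  simp only [gaussianPDFReal, NNReal.coe_one, mul_one, sub_zero]
  ring_nf

lemma pdf_nonneg (x : ℝ) : 0 ≤ gaussianPDFReal 0 1 x := gaussianPDFReal_nonneg 0 1 x

lemma integrable_pow_mul_pdf (k : ℕ) :
    Integrable (fun x : ℝ => x ^ k * gaussianPDFReal 0 1 x) := by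
  have h : Integrable (fun x : ℝ => x ^ (k:ℝ) * Real.exp (-(1/2) * x ^ 2)) :=
    integrable_rpow_mul_exp_neg_mul_sq (by norm_num)
      (lt_of_lt_of_le (by norm_num) (Nat.cast_nonneg k))
  have h2 := h.const_mul ((Real.sqrt (2 * π))⁻¹)
  refine h2.congr ?_
  · filter_upwards with x
    rw [pdf_eq, Real.rpow_natCast]
    ring

lemma integrable_abs_pow_mul_pdf (k : ℕ) :
    Integrable (fun x : ℝ => |x| ^ k * gaussianPDFReal 0 1 x) := by
  refine (integrable_pow_mul_pdf k).abs.congr ?_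
  filter_upwards with x
  rw [abs_mul, abs_pow, abs_of_nonneg (pdf_nonneg x)]

lemma integral_g01 (f : ℝ → ℝ) :
    ∫ x, f x ∂(gaussianReal 0 1) = ∫ x, f x * gaussianPDFReal 0 1 x := by
  rw [gaussianReal_of_var_ne_zero 0 one_ne_zero]
  have h : (gaussianPDF 0 1) = fun x => ((Real.toNNReal (gaussianPDFReal 0 1 x)) : ℝ≥0∞) := rfl
  rw [h, integral_withDensity_eq_integral_smul
    (measurable_gaussianPDFReal 0 1).real_toNNReal f]
  congr 1
  funext x
  rw [NNReal.smul_def, Real.coe_toNNReal _ (pdf_nonneg x), smul_eq_mul, mul_comm]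

lemma integrable_g01_iff (f : ℝ → ℝ) :
    Integrable f (gaussianReal 0 1)
      ↔ Integrable (fun x => f x * gaussianPDFReal 0 1 x) volume := by
  rw [gaussianReal_of_var_ne_zero 0 one_ne_zero]
  have h : (gaussianPDF 0 1) = fun x => ENNReal.ofReal (gaussianPDFReal 0 1 x) := rfl
  rw [h, integrable_withDensity_iff (measurable_gaussianPDFReal 0 1).ennreal_ofReal
    (ae_of_all _ fun x => ENNReal.ofReal_lt_top)]
  constructor <;> intro hi <;> refine hi.congr ?_ <;> filter_upwards with x <;>
    rw [ENNReal.toReal_ofReal (pdf_nonneg x)]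

lemma integrable_pow_g01 (k : ℕ) : Integrable (fun x : ℝ => x ^ k) (gaussianReal 0 1) :=
  (integrable_g01_iff _).mpr (integrable_pow_mul_pdf k)

lemma pdf_even (x : ℝ) : gaussianPDFReal 0 1 (-x) = gaussianPDFReal 0 1 x := by
  rw [pdf_eq, pdf_eq, neg_pow]
  norm_num

lemma integral_pow_g01_odd (k : ℕ) (hk : Odd k) :
    ∫ x, x ^ k ∂(gaussianReal 0 1) = 0 := by
  rw [integral_g01]
  have h := MeasureTheory.integral_neg_eq_self
    (fun x : ℝ => x ^ k * gaussianPDFReal 0 1 x) volume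
  have h2 : ∀ x : ℝ, (-x) ^ k * gaussianPDFReal 0 1 (-x)
      = -(x ^ k * gaussianPDFReal 0 1 x) := by
    intro x
    rw [hk.neg_pow, pdf_even, neg_mul]
  simp_rw [h2] at h
  rw [integral_neg] at h
  linarith



end Stmt12Aux
namespace Stmt12Aux2

lemma tendsto_mul_exp_top : Tendsto (fun x : ℝ => x * Real.exp (-(1/2) * x ^ 2)) atTop (nhds 0) := by
  have h := rpow_mul_exp_neg_mul_sq_isLittleO_exp_neg (b := 1/2) (by norm_num) 1
  have hexp : Tendsto (fun x : ℝ => Real.exp (-(1/2) * x)) atTop (nhds 0) :=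
    Real.tendsto_exp_atBot.comp <|
      (tendsto_const_mul_atBot_of_neg (by norm_num)).mpr tendsto_id
  have h2 := h.isBigO.trans_tendsto hexp
  refine h2.congr' ?_
  filter_upwards [eventually_ge_atTop (0:ℝ)] with x _
  rw [Real.rpow_one]

lemma tendsto_f_top : Tendsto (fun x : ℝ => -x * Real.exp (-(1/2) * x ^ 2)) atTop (nhds 0) := by
  have := tendsto_mul_exp_top.neg
  simp only [neg_zero] at this
  refine this.congr fun x => by ring

lemma tendsto_f_bot : Tendsto (fun x : ℝ => -x * Real.exp (-(1/2) * x ^ 2)) atBot (nhds 0) := by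
  have h := tendsto_mul_exp_top.comp tendsto_neg_atBot_atTop
  refine h.congr fun x => ?_
  simp only [Function.comp_apply]
  ring_nf

lemma integrable_sq_exp : Integrable (fun x : ℝ => x ^ 2 * Real.exp (-(1/2) * x ^ 2)) := by
  have h : Integrable (fun x : ℝ => x ^ ((2:ℕ):ℝ) * Real.exp (-(1/2) * x ^ 2)) :=
    integrable_rpow_mul_exp_neg_mul_sq (by norm_num) (by norm_num)
  refine h.congr ?_
  filter_upwards with x
  rw [Real.rpow_natCast]

lemma integral_sq_exp :
    ∫ x : ℝ, x ^ 2 * Real.exp (-(1/2) * x ^ 2) = Real.sqrt (2 * π) := by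
  have hderiv : ∀ x : ℝ, HasDerivAt (fun x : ℝ => -x * Real.exp (-(1/2) * x ^ 2))
      (x ^ 2 * Real.exp (-(1/2) * x ^ 2) - Real.exp (-(1/2) * x ^ 2)) x := by
    intro x
    have h1 : HasDerivAt (fun x : ℝ => -(1/2) * x ^ 2) (-(1/2) * (2 * x ^ 1)) x :=
      (hasDerivAt_pow 2 x).const_mul _
    have h2 := h1.exp
    have h3 : HasDerivAt (fun x : ℝ => -x) (-1) x := (hasDerivAt_id x).neg
    have h4 : HasDerivAt (fun x : ℝ => -x * Real.exp (-(1/2) * x ^ 2)) _ x := h3.mul h2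
    convert h4 using 1
    ring
  have hint : Integrable (fun x : ℝ =>
      x ^ 2 * Real.exp (-(1/2) * x ^ 2) - Real.exp (-(1/2) * x ^ 2)) :=
    integrable_sq_exp.sub (integrable_exp_neg_mul_sq (by norm_num))
  have h0 := MeasureTheory.integral_of_hasDerivAt_of_tendsto hderiv hint
      tendsto_f_bot tendsto_f_top
  rw [sub_zero] at h0
  have hs := integral_sub integrable_sq_exp (integrable_exp_neg_mul_sq (by norm_num : (0:ℝ) < 1/2))
  rw [hs] at h0
  have hg : ∫ x : ℝ, Real.exp (-(1/2) * x ^ 2) = Real.sqrt (2 * π) := by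
    have h2 := integral_gaussian (1/2)
    have h3 : π / (1/2) = 2 * π := by ring
    rw [h3] at h2
    exact h2
  linarith [hg]

lemma integral_sq_g01 : ∫ x, x ^ 2 ∂(gaussianReal 0 1) = 1 := by
  rw [Stmt12Aux.integral_g01]
  have h : ∀ x : ℝ, x ^ 2 * gaussianPDFReal 0 1 x
      = (Real.sqrt (2 * π))⁻¹ * (x ^ 2 * Real.exp (-(1/2) * x ^ 2)) := by
    intro x; rw [Stmt12Aux.pdf_eq]; ring
  simp_rw [h]
  rw [integral_const_mul, integral_sq_exp, inv_mul_cancel₀]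
  exact ne_of_gt (Real.sqrt_pos.mpr (by positivity))

end Stmt12Aux2

namespace Stmt12Aux3

open Stmt12Aux Stmt12Aux2

lemma memLp3_g01 : MemLp (fun x : ℝ => x) 3 (gaussianReal 0 1) := by
  have h3 : ((3 : ℝ≥0∞)).toReal = (3 : ℝ) := by norm_num
  have hint : Integrable (fun x : ℝ => ‖x‖ ^ ((3:ℝ≥0∞).toReal)) (gaussianReal 0 1) := by
    rw [h3]
    have h := (integrable_g01_iff (fun x => |x| ^ (3:ℕ))).mpr (integrable_abs_pow_mul_pdf 3)
    refine h.congr ?_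
    filter_upwards with x
    rw [Real.norm_eq_abs, show (3:ℝ) = ((3:ℕ):ℝ) by norm_num, Real.rpow_natCast]
  have hiff := memLp_norm_rpow_iff (q := 3) (p := 3) (μ := gaussianReal 0 1)
    (f := fun x : ℝ => x) aestronglyMeasurable_id (by norm_num) (by norm_num)
  have h1 : (3 : ℝ≥0∞) / 3 = 1 := ENNReal.div_self (by norm_num) (by norm_num)
  rw [h1] at hiff
  exact hiff.mp (memLp_one_iff_integrable.mpr hint)

end Stmt12Aux3
/-- Third moment of an aggregate return with predictable volatility:
if `r_i = σ_i·ε_i` with `ε_i` i.i.d. standard Gaussians, `σ_i` bounded and measurable with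
respect to the σ-algebra generated by the previous `ε_j`'s, then
`E[(Σ r_i)³] = 3·Σ_i Σ_{j<i} E[r_j·σ_i²]`. -/
theorem stmt12 {Ω : Type*} [MeasureSpace Ω] [IsProbabilityMeasure (ℙ : Measure Ω)]
    (T : ℕ) (hT : 1 ≤ T) (ε σ : ℕ → Ω → ℝ)
    (hmeas : ∀ i, Measurable (ε i))
    (hindep : iIndepFun ε ℙ)
    (hgauss : ∀ i, Measure.map (ε i) ℙ = gaussianReal 0 1)
    (C : ℝ) (hbd : ∀ i ω, |σ i ω| ≤ C)
    (F : ℕ → MeasurableSpace Ω)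
    (hF : F = fun k => ⨆ j ∈ Finset.range k, MeasurableSpace.comap (ε j) (borel ℝ))
    (hpred : ∀ i, Measurable[F i] (σ i))
    (r : ℕ → Ω → ℝ) (hr : r = fun i ω => σ i ω * ε i ω) :
    ∫ ω, (∑ i ∈ Finset.range T, r i ω) ^ 3 =
      3 * ∑ i ∈ Finset.range T, ∑ j ∈ Finset.range i, ∫ ω, r j ω * (σ i ω) ^ 2 := by
  classical
  -- nonemptiness and nonnegativity of the bound
  have hne : Nonempty Ω := by
    by_contra h
    rw [not_nonempty_iff] at h
    have h1 : (ℙ : Measure Ω) Set.univ = 1 := measure_univ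
    rw [Set.univ_eq_empty_iff.mpr h, measure_empty] at h1
    exact zero_ne_one h1
  obtain ⟨ω0⟩ := hne
  have hC : 0 ≤ C := (abs_nonneg _).trans (hbd 0 ω0)
  have hBorel : (Real.measurableSpace) = borel ℝ := BorelSpace.measurable_eq
  -- filtration facts
  have hFle : ∀ k, F k ≤ (inferInstance : MeasurableSpace Ω) := by
    intro k
    rw [hF]
    refine iSup₂_le fun j hj => ?_
    rw [← hBorel]
    exact measurable_iff_comap_le.mp (hmeas j)
  have hFmono : Monotone F := by
    intro a b hab
    rw [hF]
    refine iSup₂_le fun j hj => ?_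
    exact le_iSup₂ (f := fun j (_ : j ∈ Finset.range b) =>
      MeasurableSpace.comap (ε j) (borel ℝ)) j
      (Finset.mem_range.mpr ((Finset.mem_range.mp hj).trans_le hab))
  have hεF : ∀ {j k : ℕ}, j < k → Measurable[F k] (ε j) := by
    intro j k hjk
    rw [measurable_iff_comap_le, hBorel, hF]
    exact le_iSup₂ (f := fun j (_ : j ∈ Finset.range k) =>
      MeasurableSpace.comap (ε j) (borel ℝ)) j (Finset.mem_range.mpr hjk)
  have hσm : ∀ i, Measurable (σ i) := fun i => (hpred i).mono (hFle i) le_rfl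
  -- independence of F n and ε n
  have hIndep : ∀ n, Indep (F n) (MeasurableSpace.comap (ε n) (borel ℝ)) ℙ := by
    intro n
    have h1 : iIndep (fun i => MeasurableSpace.comap (ε i) (borel ℝ)) ℙ := by
      have h := (iIndepFun_iff_iIndep _ _ _).mp hindep
      rwa [hBorel] at h
    have h2 := ProbabilityTheory.indep_biSup_compl
      (fun i => by rw [← hBorel]; exact measurable_iff_comap_le.mp (hmeas i)) h1 {i | i < n}
    have hFn : F n = ⨆ i ∈ {i : ℕ | i < n}, MeasurableSpace.comap (ε i) (borel ℝ) := by
      rw [hF]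
      simp only [Finset.mem_range, Set.mem_setOf_eq]
    have hle2 : MeasurableSpace.comap (ε n) (borel ℝ)
        ≤ ⨆ i ∈ {i : ℕ | i < n}ᶜ, MeasurableSpace.comap (ε i) (borel ℝ) :=
      le_iSup₂ (f := fun i (_ : i ∈ {i : ℕ | i < n}ᶜ) =>
        MeasurableSpace.comap (ε i) (borel ℝ)) n (by simp)
    rw [hFn]
    exact ProbabilityTheory.indep_of_indep_of_le_right h2 hle2
  have hIndepFun : ∀ (n : ℕ) (g : Ω → ℝ), Measurable[F n] g → ∀ (φ : ℝ → ℝ), Measurable φ →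
      IndepFun g (fun ω => φ (ε n ω)) ℙ := by
    intro n g hg φ hφ
    rw [IndepFun_iff_Indep]
    refine ProbabilityTheory.indep_of_indep_of_le_right
      (ProbabilityTheory.indep_of_indep_of_le_left (hIndep n)
        (measurable_iff_comap_le.mp hg)) ?_
    have h1 : (fun ω => φ (ε n ω)) = φ ∘ ε n := rfl
    rw [h1, ← MeasurableSpace.comap_comp]
    refine MeasurableSpace.comap_mono ?_
    rw [← hBorel]
    exact measurable_iff_comap_le.mp hφ
  -- moments of the gaussians
  have hεint : ∀ (n k : ℕ), Integrable (fun ω => ε n ω ^ k) ℙ := by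
    intro n k
    have h := Stmt12Aux.integrable_pow_g01 k
    rw [← hgauss n] at h
    exact (integrable_map_measure (measurable_id.pow_const k).aestronglyMeasurable
      (hmeas n).aemeasurable).mp h
  have hεval : ∀ (n k : ℕ), (∫ ω, ε n ω ^ k) = ∫ x, x ^ k ∂(gaussianReal 0 1) := by
    intro n k
    have hpk : Measurable (fun x : ℝ => x ^ k) := measurable_id.pow_const k
    rw [← hgauss n, integral_map (hmeas n).aemeasurable hpk.aestronglyMeasurable]
  have hε1 : ∀ n, (∫ ω, ε n ω) = 0 := by
    intro n
    have h := (hεval n 1).trans (Stmt12Aux.integral_pow_g01_odd 1 odd_one)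
    simpa using h
  have hε2 : ∀ n, (∫ ω, ε n ω ^ 2) = 1 := fun n =>
    (hεval n 2).trans Stmt12Aux2.integral_sq_g01
  have hε3 : ∀ n, (∫ ω, ε n ω ^ 3) = 0 := fun n =>
    (hεval n 3).trans (Stmt12Aux.integral_pow_g01_odd 3 ⟨1, by norm_num⟩)
  -- Lp membership
  have hεLp : ∀ n, MemLp (ε n) 3 ℙ := by
    intro n
    have h := Stmt12Aux3.memLp3_g01
    rw [← hgauss n] at h
    exact (memLp_map_measure_iff aestronglyMeasurable_id (hmeas n).aemeasurable).mp h
  have hrLp : ∀ n, MemLp (fun ω => σ n ω * ε n ω) 3 ℙ := by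
    intro n
    refine MemLp.of_le ((hεLp n).const_mul C)
      (((hσm n).mul (hmeas n)).aestronglyMeasurable) ?_
    filter_upwards with ω
    rw [Real.norm_eq_abs, Real.norm_eq_abs, abs_mul, abs_mul, abs_of_nonneg hC]
    exact mul_le_mul_of_nonneg_right (hbd n ω) (abs_nonneg _)
  have hrint : ∀ j, Integrable (fun ω => σ j ω * ε j ω) ℙ := fun j =>
    (hrLp j).integrable (by norm_num)
  -- partial sums
  set S : ℕ → Ω → ℝ := fun n ω => ∑ j ∈ Finset.range n, σ j ω * ε j ω with hS
  have hSF : ∀ n, Measurable[F n] (S n) := by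
    intro n
    simp only [hS]
    refine Finset.measurable_sum _ fun j hj => ?_
    have hj' := Finset.mem_range.mp hj
    exact ((hpred j).mono (hFmono hj'.le) le_rfl).mul (hεF hj')
  have hSm : ∀ n, Measurable (S n) := fun n => (hSF n).mono (hFle n) le_rfl
  have hSLp : ∀ n, MemLp (S n) 3 ℙ := by
    intro n
    simp only [hS]
    exact memLp_finset_sum _ fun j _ => hrLp j
  have hS1 : ∀ n, Integrable (S n) ℙ := fun n => (hSLp n).integrable (by norm_num)
  have hS2 : ∀ n, Integrable (fun ω => S n ω ^ 2) ℙ := fun n =>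
    ((hSLp n).mono_exponent (by norm_num)).integrable_sq
  have hS3 : ∀ n, Integrable (fun ω => S n ω ^ 3) ℙ := by
    intro n
    have h := (hSLp n).integrable_norm_rpow (by norm_num) (by norm_num)
    refine Integrable.mono' h ((hSm n).pow_const 3).aestronglyMeasurable ?_
    filter_upwards with ω
    rw [Real.norm_eq_abs, Real.norm_eq_abs, abs_pow,
      show ((3:ℝ≥0∞)).toReal = ((3:ℕ):ℝ) by norm_num, Real.rpow_natCast]
  -- the key induction
  have key : ∀ n, (∫ ω, S n ω ^ 3)
      = 3 * ∑ i ∈ Finset.range n, ∑ j ∈ Finset.range i,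
          ∫ ω, (σ j ω * ε j ω) * σ i ω ^ 2 := by
    intro n
    induction n with
    | zero => simp [hS]
    | succ n ih =>
      have hg1F : Measurable[F n] (fun ω => S n ω ^ 2 * σ n ω) :=
        ((hSF n).pow_const 2).mul (hpred n)
      have hg2F : Measurable[F n] (fun ω => S n ω * σ n ω ^ 2) :=
        (hSF n).mul ((hpred n).pow_const 2)
      have hg3F : Measurable[F n] (fun ω => σ n ω ^ 3) := (hpred n).pow_const 3
      have hg1i : Integrable (fun ω => S n ω ^ 2 * σ n ω) ℙ := by
        have h := (hS2 n).bdd_mul ((hσm n).aestronglyMeasurable)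
          (c := C) (ae_of_all _ fun ω => by rw [Real.norm_eq_abs]; exact hbd n ω)
        exact h.congr (ae_of_all _ fun ω => mul_comm _ _)
      have hg2i : Integrable (fun ω => S n ω * σ n ω ^ 2) ℙ := by
        have h := (hS1 n).bdd_mul (((hσm n).pow_const 2).aestronglyMeasurable)
          (c := C ^ 2) (ae_of_all _ fun ω => by
            rw [Real.norm_eq_abs, abs_pow]
            exact pow_le_pow_left₀ (abs_nonneg _) (hbd n ω) 2)
        exact h.congr (ae_of_all _ fun ω => mul_comm _ _)
      have hg3i : Integrable (fun ω => σ n ω ^ 3) ℙ := by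
        refine Integrable.mono' (integrable_const (C ^ 3))
          ((hσm n).pow_const 3).aestronglyMeasurable ?_
        filter_upwards with ω
        rw [Real.norm_eq_abs, abs_pow]
        exact pow_le_pow_left₀ (abs_nonneg _) (hbd n ω) 3
      have hI1 : IndepFun (fun ω => S n ω ^ 2 * σ n ω) (fun ω => ε n ω) ℙ :=
        hIndepFun n _ hg1F (fun x => x) measurable_id
      have hI2 : IndepFun (fun ω => S n ω * σ n ω ^ 2) (fun ω => ε n ω ^ 2) ℙ :=
        hIndepFun n _ hg2F (fun x => x ^ 2) (measurable_id.pow_const 2)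
      have hI3 : IndepFun (fun ω => σ n ω ^ 3) (fun ω => ε n ω ^ 3) ℙ :=
        hIndepFun n _ hg3F (fun x => x ^ 3) (measurable_id.pow_const 3)
      have hεn1 : Integrable (fun ω => ε n ω) ℙ := by simpa using hεint n 1
      have hP1 : Integrable (fun ω => (S n ω ^ 2 * σ n ω) * ε n ω) ℙ :=
        hI1.integrable_mul hg1i hεn1
      have hP2 : Integrable (fun ω => (S n ω * σ n ω ^ 2) * ε n ω ^ 2) ℙ :=
        hI2.integrable_mul hg2i (hεint n 2)
      have hP3 : Integrable (fun ω => (σ n ω ^ 3) * ε n ω ^ 3) ℙ :=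
        hI3.integrable_mul hg3i (hεint n 3)
      have hfun : ∀ ω, S (n+1) ω ^ 3
          = S n ω ^ 3 + 3 * ((S n ω ^ 2 * σ n ω) * ε n ω)
            + 3 * ((S n ω * σ n ω ^ 2) * ε n ω ^ 2) + (σ n ω ^ 3) * ε n ω ^ 3 := by
        intro ω
        have h : S (n+1) ω = S n ω + σ n ω * ε n ω := by
          simp only [hS]
          exact Finset.sum_range_succ _ n
        rw [h]; ring
      have hL : (∫ ω, S (n+1) ω ^ 3)
          = (∫ ω, S n ω ^ 3) + 3 * (∫ ω, (S n ω ^ 2 * σ n ω) * ε n ω)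
            + 3 * (∫ ω, (S n ω * σ n ω ^ 2) * ε n ω ^ 2)
            + (∫ ω, (σ n ω ^ 3) * ε n ω ^ 3) := by
        have hA : Integrable (fun ω => S n ω ^ 3 + 3 * ((S n ω ^ 2 * σ n ω) * ε n ω)) ℙ :=
          (hS3 n).add (hP1.const_mul 3)
        have hB : Integrable (fun ω => S n ω ^ 3 + 3 * ((S n ω ^ 2 * σ n ω) * ε n ω)
            + 3 * ((S n ω * σ n ω ^ 2) * ε n ω ^ 2)) ℙ := hA.add (hP2.const_mul 3)
        rw [integral_congr_ae (ae_of_all _ hfun)]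
        rw [integral_add hB hP3, integral_add hA (hP2.const_mul 3),
          integral_add (hS3 n) (hP1.const_mul 3), integral_const_mul, integral_const_mul]
      have hE1 : (∫ ω, (S n ω ^ 2 * σ n ω) * ε n ω) = 0 := by
        have h := hI1.integral_mul_eq_mul_integral hg1i.1 hεn1.1
        have h2 : ((fun ω => S n ω ^ 2 * σ n ω) * fun ω => ε n ω)
            = fun ω => (S n ω ^ 2 * σ n ω) * ε n ω := rfl
        rw [h2] at h
        rw [h, hε1 n, mul_zero]
      have hE3 : (∫ ω, (σ n ω ^ 3) * ε n ω ^ 3) = 0 := by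
        have h := hI3.integral_mul_eq_mul_integral hg3i.1 (hεint n 3).1
        have h2 : ((fun ω => σ n ω ^ 3) * fun ω => ε n ω ^ 3)
            = fun ω => (σ n ω ^ 3) * ε n ω ^ 3 := rfl
        rw [h2] at h
        rw [h, hε3 n, mul_zero]
      have hE2 : (∫ ω, (S n ω * σ n ω ^ 2) * ε n ω ^ 2)
          = ∑ j ∈ Finset.range n, ∫ ω, (σ j ω * ε j ω) * σ n ω ^ 2 := by
        have h := hI2.integral_mul_eq_mul_integral hg2i.1 (hεint n 2).1
        have h2 : ((fun ω => S n ω * σ n ω ^ 2) * fun ω => ε n ω ^ 2)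
            = fun ω => (S n ω * σ n ω ^ 2) * ε n ω ^ 2 := rfl
        rw [h2] at h
        rw [h, hε2 n, mul_one]
        have h3 : ∀ ω, S n ω * σ n ω ^ 2
            = ∑ j ∈ Finset.range n, (σ j ω * ε j ω) * σ n ω ^ 2 := by
          intro ω
          simp only [hS]
          exact Finset.sum_mul _ _ _
        rw [integral_congr_ae (ae_of_all _ h3)]
        refine integral_finset_sum _ fun j hj => ?_
        have h4 := (hrint j).bdd_mul (((hσm n).pow_const 2).aestronglyMeasurable)
          (c := C ^ 2) (ae_of_all _ fun ω => by
            rw [Real.norm_eq_abs, abs_pow]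
            exact pow_le_pow_left₀ (abs_nonneg _) (hbd n ω) 2)
        exact h4.congr (ae_of_all _ fun ω => mul_comm _ _)
      rw [hL, hE1, hE2, hE3, ih, Finset.sum_range_succ]
      ring
  have hgoal := key T
  simp only [hS] at hgoal
  simp only [hr]
  exact hgoal
end

section
/- Let g : [0,∞) → ℝ be continuous with g(0) ≠ 0. Then lim_{T→0⁺} (∫₀^T g(ℓ) dℓ) / (∫₀^T (1 − ℓ/T)·g(ℓ) dℓ) = 2. In particular, the Skew-Stickiness Ratio R_T tends to 2 in the small-maturity limit, independently of the leverage correlation function (provided it is continuous and nonzero at 0). -/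
open Filter

private lemma aux_cont {g : ℝ → ℝ} (hg : ContinuousOn g (Set.Ici (0 : ℝ))) {T : ℝ}
    (hT : 0 < T) : ContinuousOn g (Set.uIcc 0 T) := by
  rw [Set.uIcc_of_le hT.le]
  exact hg.mono (Set.Icc_subset_Ici_self)

private lemma aux_num {g : ℝ → ℝ} (hg : ContinuousOn g (Set.Ici (0 : ℝ))) :
    Tendsto (fun T : ℝ => (∫ ℓ in (0 : ℝ)..T, g ℓ) / T)
      (nhdsWithin 0 (Set.Ioi 0)) (nhds (g 0)) := by
  rw [Metric.tendsto_nhdsWithin_nhds]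
  intro ε hε
  obtain ⟨δ, hδ, hδ'⟩ := Metric.continuousWithinAt_iff.mp (hg 0 (Set.mem_Ici.mpr le_rfl)) (ε / 2) (by positivity)
  refine ⟨δ, hδ, fun {T} hT hTδ => ?_⟩
  have hT0 : 0 < T := hT
  have hTδ' : T < δ := by
    have := hTδ
    rw [Real.dist_eq, sub_zero, abs_of_pos hT0] at this
    exact this
  have hint : IntervalIntegrable g MeasureTheory.volume 0 T :=
    (aux_cont hg hT0).intervalIntegrable
  have key : (∫ ℓ in (0 : ℝ)..T, g ℓ) / T - g 0
      = (∫ ℓ in (0 : ℝ)..T, (g ℓ - g 0)) / T := by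
    rw [intervalIntegral.integral_sub hint intervalIntegrable_const,
      intervalIntegral.integral_const, smul_eq_mul, sub_zero]
    field_simp
  have hbound : ‖∫ ℓ in (0 : ℝ)..T, (g ℓ - g 0)‖ ≤ (ε / 2) * |T - 0| := by
    apply intervalIntegral.norm_integral_le_of_norm_le_const
    intro x hx
    rw [Set.uIoc_of_le hT0.le] at hx
    have hx0 : (0 : ℝ) ≤ x := hx.1.le
    have hxδ : dist x 0 < δ := by
      rw [Real.dist_eq, sub_zero, abs_of_nonneg hx0]
      exact lt_of_le_of_lt hx.2 hTδ'
    exact (hδ' hx0 hxδ).le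
  rw [Real.dist_eq, key]
  rw [sub_zero, abs_of_pos hT0] at hbound
  have : |(∫ ℓ in (0 : ℝ)..T, (g ℓ - g 0)) / T| ≤ ε / 2 := by
    rw [abs_div, abs_of_pos hT0, div_le_iff₀ hT0]
    exact hbound
  linarith

private lemma aux_den {g : ℝ → ℝ} (hg : ContinuousOn g (Set.Ici (0 : ℝ))) :
    Tendsto (fun T : ℝ => (∫ ℓ in (0 : ℝ)..T, (1 - ℓ / T) * g ℓ) / T)
      (nhdsWithin 0 (Set.Ioi 0)) (nhds (g 0 / 2)) := by
  rw [Metric.tendsto_nhdsWithin_nhds]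
  intro ε hε
  obtain ⟨δ, hδ, hδ'⟩ := Metric.continuousWithinAt_iff.mp (hg 0 (Set.mem_Ici.mpr le_rfl)) (ε / 2) (by positivity)
  refine ⟨δ, hδ, fun {T} hT hTδ => ?_⟩
  have hT0 : 0 < T := hT
  have hTne : T ≠ 0 := hT0.ne'
  have hTδ' : T < δ := by
    have := hTδ
    rw [Real.dist_eq, sub_zero, abs_of_pos hT0] at this
    exact this
  have hcw : ContinuousOn (fun ℓ : ℝ => (1 - ℓ / T)) (Set.uIcc 0 T) := by
    fun_prop
  have hint1 : IntervalIntegrable (fun ℓ => (1 - ℓ / T) * g ℓ) MeasureTheory.volume 0 T :=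
    (hcw.mul (aux_cont hg hT0)).intervalIntegrable
  have hint2 : IntervalIntegrable (fun ℓ => (1 - ℓ / T) * g 0) MeasureTheory.volume 0 T :=
    (hcw.mul continuousOn_const).intervalIntegrable
  have hconst : (∫ ℓ in (0 : ℝ)..T, (1 - ℓ / T) * g 0) = (T / 2) * g 0 := by
    rw [intervalIntegral.integral_mul_const]
    have : (∫ ℓ in (0 : ℝ)..T, (1 - ℓ / T))
        = (∫ ℓ in (0 : ℝ)..T, (1 : ℝ)) - (∫ ℓ in (0 : ℝ)..T, ℓ) / T := by
      rw [← intervalIntegral.integral_div,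
        ← intervalIntegral.integral_sub intervalIntegrable_const]
      apply IntervalIntegrable.div_const
      exact intervalIntegral.intervalIntegrable_id
    rw [this, intervalIntegral.integral_const, integral_id, smul_eq_mul]
    field_simp
    ring
  have key : (∫ ℓ in (0 : ℝ)..T, (1 - ℓ / T) * g ℓ) / T - g 0 / 2
      = (∫ ℓ in (0 : ℝ)..T, (1 - ℓ / T) * (g ℓ - g 0)) / T := by
    have : (∫ ℓ in (0 : ℝ)..T, (1 - ℓ / T) * (g ℓ - g 0))
        = (∫ ℓ in (0 : ℝ)..T, (1 - ℓ / T) * g ℓ) - (T / 2) * g 0 := by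
      rw [← hconst, ← intervalIntegral.integral_sub hint1 hint2]
      congr 1
      ext ℓ
      ring
    rw [this]
    field_simp
  have hbound : ‖∫ ℓ in (0 : ℝ)..T, (1 - ℓ / T) * (g ℓ - g 0)‖ ≤ (ε / 2) * |T - 0| := by
    apply intervalIntegral.norm_integral_le_of_norm_le_const
    intro x hx
    rw [Set.uIoc_of_le hT0.le] at hx
    have hx0 : (0 : ℝ) ≤ x := hx.1.le
    have hxδ : dist x 0 < δ := by
      rw [Real.dist_eq, sub_zero, abs_of_nonneg hx0]
      exact lt_of_le_of_lt hx.2 hTδ'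
    have h1 : |1 - x / T| ≤ 1 := by
      rw [abs_le]
      constructor
      · have : x / T ≤ 1 := (div_le_one hT0).mpr hx.2
        linarith
      · have : 0 ≤ x / T := div_nonneg hx0 hT0.le
        linarith
    calc ‖(1 - x / T) * (g x - g 0)‖ = |1 - x / T| * |g x - g 0| := abs_mul _ _
      _ ≤ 1 * (ε / 2) := by
          apply mul_le_mul h1 (hδ' hx0 hxδ).le (abs_nonneg _) zero_le_one
      _ = ε / 2 := one_mul _
  rw [Real.dist_eq, key]
  rw [sub_zero, abs_of_pos hT0] at hbound
  have : |(∫ ℓ in (0 : ℝ)..T, (1 - ℓ / T) * (g ℓ - g 0)) / T| ≤ ε / 2 := by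
    rw [abs_div, abs_of_pos hT0, div_le_iff₀ hT0]
    exact hbound
  linarith

/-- Universal small-maturity limit of the Skew-Stickiness Ratio: for `g` continuous on `[0,∞)`
with `g(0) ≠ 0`, `(∫₀^T g(ℓ) dℓ) / (∫₀^T (1 − ℓ/T)·g(ℓ) dℓ) → 2` as `T → 0⁺`. -/
theorem stmt19 (g : ℝ → ℝ) (hg : ContinuousOn g (Set.Ici (0 : ℝ))) (hg0 : g 0 ≠ 0) :
    Tendsto (fun T : ℝ =>
        (∫ ℓ in (0 : ℝ)..T, g ℓ) / (∫ ℓ in (0 : ℝ)..T, (1 - ℓ / T) * g ℓ))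
      (nhdsWithin 0 (Set.Ioi 0)) (nhds 2) := by
  have hne : g 0 / 2 ≠ 0 := div_ne_zero hg0 two_ne_zero
  have hlim := (aux_num hg).div (aux_den hg) hne
  have h2 : g 0 / (g 0 / 2) = 2 := by field_simp
  rw [h2] at hlim
  refine hlim.congr' ?_
  filter_upwards [self_mem_nhdsWithin] with T hT
  have hTne : T ≠ 0 := (Set.mem_Ioi.mp hT).ne'
  simp only [Pi.div_apply]
  rw [div_div_div_cancel_right₀ hTne]
end
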